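/- arXiv:1802.08955 — 9 statements merged into one kernel-verified Lean document; each statement's English description precedes it below -/
import Mathlib

section
/- In a finite acyclic digraph G with root r and nonnegative real edge weights w, the minimum weight of an r-cut is attained at a trivial r-cut, i.e., min over nonempty U ⊆ V\{r} of w(δ⁻(U)) equals min over vertices v ≠ r of w(δ⁻(v)). -/
open scoped Classical

lemma singleton_cut_eq {V : Type*} [Fintype V] (D : V → V → Prop) (w : V → V → ℝ)
    (hD : ∀ v, ¬ Relation.TransGen D v v) (v : V) :
    (∑ p : V × V, if D p.1 p.2 ∧ p.1 ∉ ({v} : Set V) ∧ p.2 ∈ ({v} : Set V)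
        then w p.1 p.2 else 0) = ∑ u : V, if D u v then w u v else 0 := by
  rw [Fintype.sum_prod_type]
  refine Finset.sum_congr rfl fun u _ => ?_
  rw [Finset.sum_eq_single v]
  · simp only [Set.mem_singleton_iff]
    by_cases h : D u v
    · have huv : u ≠ v := by rintro rfl; exact hD u (Relation.TransGen.single h)
      simp [h, huv]
    · simp [h]
  · intro b _ hb
    simp [Set.mem_singleton_iff, hb]
  · simp

/-- In a finite acyclic digraph with nonnegative edge weights, the minimum
weight of an `r`-cut (over nonempty vertex sets avoiding `r`) is attained at a trivial
(single-vertex) `r`-cut. -/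
theorem stmt_2 {V : Type*} [Fintype V] (D : V → V → Prop) (w : V → V → ℝ)
    (hD : ∀ v, ¬ Relation.TransGen D v v)
    (hw : ∀ u v, 0 ≤ w u v) (r : V) (hV : ∃ v, v ≠ r) :
    sInf {x : ℝ | ∃ U : Set V, U.Nonempty ∧ r ∉ U ∧
        x = ∑ p : V × V, if D p.1 p.2 ∧ p.1 ∉ U ∧ p.2 ∈ U then w p.1 p.2 else 0} =
    sInf {x : ℝ | ∃ v : V, v ≠ r ∧
        x = ∑ u : V, if D u v then w u v else 0} := by
  set A := {x : ℝ | ∃ U : Set V, U.Nonempty ∧ r ∉ U ∧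
      x = ∑ p : V × V, if D p.1 p.2 ∧ p.1 ∉ U ∧ p.2 ∈ U then w p.1 p.2 else 0}
  set B := {x : ℝ | ∃ v : V, v ≠ r ∧ x = ∑ u : V, if D u v then w u v else 0}
  have hBA : B ⊆ A := by
    rintro x ⟨v, hv, rfl⟩
    exact ⟨{v}, ⟨v, rfl⟩, by simpa using Ne.symm hv,
      (singleton_cut_eq D w hD v).symm⟩
  obtain ⟨v0, hv0⟩ := hV
  have hBne : B.Nonempty := ⟨_, v0, hv0, rfl⟩
  have hAne : A.Nonempty := hBne.mono hBA
  -- every element of A is bounded below by some element of B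
  have key : ∀ x ∈ A, ∃ y ∈ B, y ≤ x := by
    rintro x ⟨U, hUne, hrU, rfl⟩
    -- find a minimal element of U w.r.t. TransGen D
    haveI : IsTrans V (Relation.TransGen D) := ⟨fun _ _ _ => Relation.TransGen.trans⟩
    haveI : IsIrrefl V (Relation.TransGen D) := ⟨hD⟩
    have wf : WellFounded (Relation.TransGen D) :=
      Finite.wellFounded_of_trans_of_irrefl _
    obtain ⟨v, hvU, hmin⟩ := wf.has_min U hUne
    have hvr : v ≠ r := fun h => hrU (h ▸ hvU)
    refine ⟨_, ⟨v, hvr, rfl⟩, ?_⟩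
    rw [← singleton_cut_eq D w hD v]
    refine Finset.sum_le_sum fun p _ => ?_
    by_cases h : D p.1 p.2 ∧ p.1 ∉ ({v} : Set V) ∧ p.2 ∈ ({v} : Set V)
    · obtain ⟨hd, _, hp2⟩ := id h
      have hp2v : p.2 = v := hp2
      have hp1 : p.1 ∉ U := fun hmem =>
        hmin p.1 hmem (hp2v ▸ Relation.TransGen.single hd)
      rw [if_pos h]
      rw [if_pos ⟨hd, hp1, hp2v ▸ hvU⟩]
    · rw [if_neg h]
      split
      · exact hw _ _
      · exact le_refl 0
  have hAbdd : BddBelow A := by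
    refine ⟨0, ?_⟩
    rintro x ⟨U, _, _, rfl⟩
    exact Finset.sum_nonneg fun p _ => by split_ifs; exacts [hw _ _, le_rfl]
  have hBbdd : BddBelow B := hAbdd.mono hBA
  apply le_antisymm
  · exact csInf_le_csInf hAbdd hBne hBA
  · refine le_csInf hAne fun x hx => ?_
    obtain ⟨y, hyB, hyx⟩ := key x hx
    exact (csInf_le hBbdd hyB).trans hyx
end

section
/- Let G be an undirected multigraph with two parallel edges e and f, w nonnegative edge weights, and G_f = G \ f with weights w_f where w_f(e) = w(e) + w(f) and w_f(g) = w(g) otherwise. Then for every vertex r, the maximum value over r-acyclic orientations of the maximum weighted packing of r-arborescences satisfies k(G, w, r) = k(G_f, w_f, r). -/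
open scoped Classical

variable {V E : Type*}

/-- The arc relation of a partial orientation `d`: there is an arc `u → v` if some
non-loop edge of `F` is directed from `u` to `v`. (Loops are never oriented/used.) -/
def arcRel (ends : E → Sym2 V) (F : Set E) (d : E → V × V) (u v : V) : Prop :=
  ∃ e ∈ F, ¬ (ends e).IsDiag ∧ d e = (u, v)

/-- `d` is an orientation of the (non-loop) edges of `F`: the chosen direction of each
edge is compatible with its endpoints. -/
def IsOrientation (ends : E → Sym2 V) (F : Set E) (d : E → V × V) : Prop :=
  ∀ e ∈ F, ¬ (ends e).IsDiag → ends e = s((d e).1, (d e).2)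

/-- The orientation `d` is acyclic: no directed cycle. -/
def AcyclicOn (ends : E → Sym2 V) (F : Set E) (d : E → V × V) : Prop :=
  ∀ v, ¬ Relation.TransGen (arcRel ends F d) v v

/-- `r` is the unique vertex of `S` with indegree `0` in the orientation `d`. -/
def RootedAt (ends : E → Sym2 V) (F : Set E) (S : Set V) (d : E → V × V) (r : V) : Prop :=
  r ∈ S ∧ (∀ u, ¬ arcRel ends F d u r) ∧ ∀ v ∈ S, (∀ u, ¬ arcRel ends F d u v) → v = r

/-- `A` is (the edge set of) a spanning `r`-arborescence of the digraph obtained by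
orienting the edges of `F` by `d`, spanning the vertex set `S`: every `v ∈ S`, `v ≠ r`,
has exactly one incoming edge of `A`, no edge of `A` enters `r`, and every vertex of `S`
is reachable from `r` along edges of `A`. -/
def IsArbM (ends : E → Sym2 V) (F : Set E) (S : Set V) (d : E → V × V) (r : V)
    (A : Set E) : Prop :=
  A ⊆ F ∧ (∀ e ∈ A, ¬ (ends e).IsDiag) ∧
  (∀ v ∈ S, v ≠ r → ∃! e, e ∈ A ∧ (d e).2 = v) ∧
  (∀ e ∈ A, (d e).1 ∈ S ∧ (d e).2 ∈ S ∧ (d e).2 ≠ r) ∧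
  (∀ v ∈ S, Relation.ReflTransGen (fun a b => ∃ e ∈ A, d e = (a, b)) r v)

/-- `kOn ends F S w r`: the maximum, over `r`-acyclic orientations `d` of the subgraph
with edges `F` and vertices `S`, of the maximum value of a weighted packing of spanning
`r`-arborescences subject to the capacities `w`. -/
noncomputable def kOn [Fintype E] (ends : E → Sym2 V) (F : Set E) (S : Set V)
    (w : E → ℝ) (r : V) : ℝ :=
  sSup {x : ℝ | ∃ d : E → V × V, IsOrientation ends F d ∧ AcyclicOn ends F d ∧
    RootedAt ends F S d r ∧
    ∃ (t : ℕ) (lam : Fin t → ℝ) (A : Fin t → Set E),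
      (∀ i, 0 ≤ lam i) ∧ (∀ i, IsArbM ends F S d r (A i)) ∧
      (∀ e ∈ F, ∑ i, (if e ∈ A i then lam i else 0) ≤ w e) ∧
      x = ∑ i, lam i}

/-- `kAll ends F S w`: the maximum of `kOn ends F S w r` over all roots `r ∈ S`. -/
noncomputable def kAll [Fintype E] (ends : E → Sym2 V) (F : Set E) (S : Set V)
    (w : E → ℝ) : ℝ :=
  sSup ((fun r => kOn ends F S w r) '' S)

/-- An arborescence stays an arborescence when the ambient edge set changes,
as long as it remains a subset. -/
lemma isArbM_of_subset {ends : E → Sym2 V} {F₁ F₂ : Set E} {S : Set V} {d : E → V × V}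
    {r : V} {A : Set E} (hsub : A ⊆ F₂) (hA : IsArbM ends F₁ S d r A) :
    IsArbM ends F₂ S d r A :=
  ⟨hsub, hA.2⟩

/-- An arborescence is preserved under changing the orientation function off `F₁`. -/
lemma isArbM_congr {ends : E → Sym2 V} {F₁ : Set E} {S : Set V} {d d' : E → V × V}
    {r : V} {A : Set E} (h : ∀ g ∈ F₁, d g = d' g) (hA : IsArbM ends F₁ S d' r A) :
    IsArbM ends F₁ S d r A := by
  obtain ⟨h1, h2, h3, h4, h5⟩ := hA
  refine ⟨h1, h2, ?_, ?_, ?_⟩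
  · intro v hv hvr
    obtain ⟨g, ⟨hg, hgv⟩, hu⟩ := h3 v hv hvr
    exact ⟨g, ⟨hg, by rw [h g (h1 hg)]; exact hgv⟩,
      fun c hc => hu c ⟨hc.1, by rw [← h c (h1 hc.1)]; exact hc.2⟩⟩
  · intro g hg; rw [h g (h1 hg)]; exact h4 g hg
  · intro v hv
    refine Relation.ReflTransGen.mono ?_ _ _ (h5 v hv)
    rintro x y ⟨g, hg, hdg⟩
    exact ⟨g, hg, by rw [h g (h1 hg)]; exact hdg⟩

/-- Swapping an edge `a` of an arborescence for a parallel, identically oriented edge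
`b` yields an arborescence. -/
lemma isArbM_swap {ends : E → Sym2 V} {F₁ F₂ : Set E} {S : Set V} {d : E → V × V}
    {r : V} {A : Set E} {a b : E}
    (hd : d a = d b) (hb : ¬(ends b).IsDiag)
    (hA : IsArbM ends F₁ S d r A) (ha : a ∈ A)
    (hsub : (A \ {a}) ∪ {b} ⊆ F₂) :
    IsArbM ends F₂ S d r ((A \ {a}) ∪ {b}) := by
  obtain ⟨h1, h2, h3, h4, h5⟩ := hA
  have hhead := h4 a ha
  refine ⟨hsub, ?_, ?_, ?_, ?_⟩
  · rintro g (⟨hg, -⟩ | hg)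
    · exact h2 g hg
    · rw [Set.mem_singleton_iff] at hg; subst hg; exact hb
  · intro v hv hvr
    obtain ⟨g, ⟨hg, hgv⟩, hu⟩ := h3 v hv hvr
    by_cases hga : g = a
    · subst hga
      refine ⟨b, ⟨Or.inr rfl, by rw [← hd]; exact hgv⟩, ?_⟩
      rintro c ⟨(⟨hc, hca⟩ | hc), hcv⟩
      · exact absurd (hu c ⟨hc, hcv⟩) hca
      · exact hc
    · refine ⟨g, ⟨Or.inl ⟨hg, hga⟩, hgv⟩, ?_⟩
      rintro c ⟨(⟨hc, hca⟩ | hc), hcv⟩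
      · exact hu c ⟨hc, hcv⟩
      · rw [Set.mem_singleton_iff] at hc; subst hc
        exact absurd (hu a ⟨ha, by rw [hd]; exact hcv⟩).symm hga
  · rintro g (⟨hg, -⟩ | hg)
    · exact h4 g hg
    · rw [Set.mem_singleton_iff] at hg; subst hg; rw [← hd]; exact hhead
  · intro v hv
    refine Relation.ReflTransGen.mono ?_ _ _ (h5 v hv)
    rintro x y ⟨g, hg, hdg⟩
    by_cases hga : g = a
    · exact ⟨b, Or.inr rfl, by rw [← hd, ← hga]; exact hdg⟩
    · exact ⟨g, Or.inl ⟨hg, hga⟩, hdg⟩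

/-- If `d f = d e` and `e, f` are parallel non-loops, removing `f` does not change the
arc relation. -/
lemma arcRel_univ_eq {ends : E → Sym2 V} {d : E → V × V} {e f : E}
    (hef : e ≠ f) (hpar : ends e = ends f) (hloop : ¬ (ends e).IsDiag)
    (hde : d f = d e) :
    arcRel ends Set.univ d = arcRel ends {g | g ≠ f} d := by
  funext u v
  apply propext
  constructor
  · rintro ⟨g, -, hg, hgd⟩
    by_cases hgf : g = f
    · subst hgf
      rw [hde] at hgd
      exact ⟨e, hef, hloop, hgd⟩
    · exact ⟨g, hgf, hg, hgd⟩
  · rintro ⟨g, -, hg, hgd⟩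
    exact ⟨g, trivial, hg, hgd⟩

lemma arcRel_congr {ends : E → Sym2 V} {F : Set E} {d d' : E → V × V}
    (h : ∀ g ∈ F, d g = d' g) :
    arcRel ends F d = arcRel ends F d' := by
  funext u v
  apply propext
  constructor
  · rintro ⟨g, hgF, hg, hgd⟩; exact ⟨g, hgF, hg, by rw [← h g hgF]; exact hgd⟩
  · rintro ⟨g, hgF, hg, hgd⟩; exact ⟨g, hgF, hg, by rw [h g hgF]; exact hgd⟩

/-- In an acyclic orientation, parallel non-loop edges are oriented the same way. -/
lemma forced_dir {ends : E → Sym2 V} {d : E → V × V} {e f : E}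
    (hor : IsOrientation ends Set.univ d) (hac : AcyclicOn ends Set.univ d)
    (hpar : ends e = ends f) (hloop : ¬ (ends e).IsDiag) :
    d f = d e := by
  have hfl : ¬ (ends f).IsDiag := hpar ▸ hloop
  have h1 := hor e trivial hloop
  have h2 := hor f trivial hfl
  have h3 : s((d e).1, (d e).2) = s((d f).1, (d f).2) := by rw [← h1, ← h2, hpar]
  rw [Sym2.eq_iff] at h3
  rcases h3 with ⟨ha, hb⟩ | ⟨ha, hb⟩
  · exact Prod.ext ha.symm hb.symm
  · exfalso
    apply hac (d e).1
    have hA : arcRel ends Set.univ d (d e).1 (d e).2 := ⟨e, trivial, hloop, rfl⟩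
    have hB : arcRel ends Set.univ d (d e).2 (d e).1 := by
      exact ⟨f, trivial, hfl, Prod.ext hb.symm ha.symm⟩
    exact (Relation.TransGen.single hA).tail hB

/-- Merging two parallel edges `e, f` (deleting `f` and adding its weight
to `e`) does not change the maximum, over `r`-acyclic orientations, of the maximum
weighted packing of `r`-arborescences: `k(G, w, r) = k(G \ f, w_f, r)`. -/
theorem stmt_4 [Fintype V] [Fintype E] (ends : E → Sym2 V) (w : E → ℝ)
    (hw : ∀ e, 0 ≤ w e) (e f : E) (hef : e ≠ f) (hpar : ends e = ends f)
    (hloop : ¬ (ends e).IsDiag) (r : V) :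
    kOn ends Set.univ Set.univ w r =
      kOn ends {g | g ≠ f} Set.univ (fun g => if g = e then w e + w f else w g) r := by
  have hfl : ¬ (ends f).IsDiag := hpar ▸ hloop
  unfold kOn
  congr 1
  ext x
  simp only [Set.mem_setOf_eq]
  constructor
  · -- from G to G \ f
    rintro ⟨d, hor, hac, hroot, t, lam, A, hlam, hA, hcap, hx⟩
    have hde : d f = d e := forced_dir hor hac hpar hloop
    have harc : arcRel ends Set.univ d = arcRel ends {g | g ≠ f} d :=
      arcRel_univ_eq hef hpar hloop hde
    set B : Fin t → Set E := fun i => if f ∈ A i then (A i \ {f}) ∪ {e} else A i with hB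
    refine ⟨d, ?_, ?_, ?_, t, lam, B, hlam, ?_, ?_, hx⟩
    · intro g _ hgd; exact hor g trivial hgd
    · intro v; rw [← harc]; exact hac v
    · unfold RootedAt at hroot ⊢; rw [← harc]; exact hroot
    · intro i
      by_cases hfi : f ∈ A i
      · simp only [hB]; simp only [if_pos hfi]
        refine isArbM_swap hde hloop (hA i) hfi ?_
        rintro g (⟨-, hg⟩ | hg)
        · exact hg
        · rw [Set.mem_singleton_iff] at hg; subst hg; exact hef
      · simp only [hB]; simp only [if_neg hfi]
        refine isArbM_of_subset ?_ (hA i)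
        intro g hg
        intro hgf
        exact hfi (by rw [← hgf]; exact hg)
    · intro g hgf
      by_cases hge : g = e
      · subst hge
        simp only [if_pos rfl]
        calc ∑ i, (if g ∈ B i then lam i else 0)
            ≤ ∑ i, ((if g ∈ A i then lam i else 0) + (if f ∈ A i then lam i else 0)) := by
              refine Finset.sum_le_sum fun i _ => ?_
              by_cases hfi : f ∈ A i
              · simp only [hB]; simp only [if_pos hfi]
                have hmem : g ∈ (A i \ {f}) ∪ {g} := Or.inr rfl
                rw [if_pos hmem]
                split_ifs <;> linarith [hlam i]
              · simp only [hB]; simp only [if_neg hfi]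
                split_ifs <;> linarith [hlam i]
          _ = (∑ i, (if g ∈ A i then lam i else 0)) + ∑ i, (if f ∈ A i then lam i else 0) :=
              Finset.sum_add_distrib
          _ ≤ w g + w f := add_le_add (hcap g trivial) (hcap f trivial)
      · rw [if_neg hge]
        have hmem : ∀ i, (g ∈ B i) ↔ g ∈ A i := by
          intro i
          simp only [hB]
          by_cases hfi : f ∈ A i
          · simp only [if_pos hfi]
            constructor
            · rintro (⟨h, -⟩ | h)
              · exact h
              · rw [Set.mem_singleton_iff] at h; exact absurd h hge
            · exact fun h => Or.inl ⟨h, hgf⟩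
          · simp only [if_neg hfi]
        calc ∑ i, (if g ∈ B i then lam i else 0)
              = ∑ i, (if g ∈ A i then lam i else 0) :=
                Finset.sum_congr rfl fun i _ => by simp only [hmem i]
            _ ≤ w g := hcap g trivial
  · -- from G \ f to G
    rintro ⟨d', hor', hac', hroot', t, lam, A, hlam, hA, hcap, hx⟩
    set d : E → V × V := Function.update d' f (d' e) with hd_def
    have hdf : d f = d' e := Function.update_self f (d' e) d'
    have hdg : ∀ g, g ≠ f → d g = d' g := fun g h => Function.update_of_ne h (d' e) d'
    have hde : d f = d e := by rw [hdf, hdg e hef]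
    have harc1 : arcRel ends Set.univ d = arcRel ends {g | g ≠ f} d :=
      arcRel_univ_eq hef hpar hloop hde
    have harc2 : arcRel ends {g | g ≠ f} d = arcRel ends {g | g ≠ f} d' :=
      arcRel_congr fun g hg => hdg g hg
    have hdcongr : ∀ g ∈ {g | g ≠ f}, d g = d' g := fun g hg => hdg g hg
    -- the splitting coefficient
    set S : ℝ := ∑ i, (if e ∈ A i then lam i else 0) with hS_def
    have hS0 : 0 ≤ S := Finset.sum_nonneg fun i _ => by
      split_ifs; exacts [hlam i, le_refl 0]
    have hS : S ≤ w e + w f := by simpa using hcap e hef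
    set c : ℝ := if S ≤ w e then 1 else w e / S with hc_def
    have hSpos : ¬ S ≤ w e → 0 < S := fun h => lt_of_le_of_lt (hw e) (not_le.mp h)
    have hc0 : 0 ≤ c := by
      rw [hc_def]; split_ifs with h
      · exact zero_le_one
      · exact div_nonneg (hw e) (hSpos h).le
    have hc1 : c ≤ 1 := by
      rw [hc_def]; split_ifs with h
      · exact le_refl 1
      · exact (div_le_one (hSpos h)).mpr (not_le.mp h).le
    have hcS : c * S ≤ w e := by
      rw [hc_def]; split_ifs with h
      · simpa using h
      · rw [div_mul_cancel₀ _ (hSpos h).ne']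
    have h1cS : (1 - c) * S ≤ w f := by
      rw [hc_def]; split_ifs with h
      · simp [hw f]
      · have hSne : S ≠ 0 := (hSpos h).ne'
        have : (1 - w e / S) * S = S - w e := by field_simp
        rw [this]; linarith
    set μ : Fin t → ℝ := fun i => if e ∈ A i then c * lam i else lam i with hμ
    set ν : Fin t → ℝ := fun i => if e ∈ A i then (1 - c) * lam i else 0 with hν
    set B₂ : Fin t → Set E := fun i => if e ∈ A i then (A i \ {e}) ∪ {f} else A i with hB₂
    have hμν : ∀ i, μ i + ν i = lam i := by
      intro i; rw [hμ, hν]; by_cases hei : e ∈ A i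
      · simp only [if_pos hei]; ring
      · simp only [if_neg hei]; ring
    refine ⟨d, ?_, ?_, ?_, t + t, Fin.addCases μ ν, Fin.addCases A B₂, ?_, ?_, ?_, ?_⟩
    · intro g _ hgd
      by_cases hgf : g = f
      · subst hgf
        rw [hdf, ← hpar]
        exact hor' e hef hloop
      · rw [hdg g hgf]
        exact hor' g hgf hgd
    · intro v; rw [harc1, harc2]; exact hac' v
    · unfold RootedAt at hroot' ⊢; rw [harc1, harc2]; exact hroot'
    · intro k
      refine Fin.addCases (fun i => ?_) (fun i => ?_) k
      · simp only [Fin.addCases_left]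
        simp only [hμ]; split_ifs
        · exact mul_nonneg hc0 (hlam i)
        · exact hlam i
      · simp only [Fin.addCases_right]
        simp only [hν]; split_ifs
        · exact mul_nonneg (by linarith) (hlam i)
        · exact le_refl 0
    · intro k
      refine Fin.addCases (fun i => ?_) (fun i => ?_) k
      · simp only [Fin.addCases_left]
        exact isArbM_of_subset (Set.subset_univ _) (isArbM_congr hdcongr (hA i))
      · simp only [Fin.addCases_right]
        simp only [hB₂]
        by_cases hei : e ∈ A i
        · simp only [if_pos hei]
          exact isArbM_swap hde.symm hfl (isArbM_congr hdcongr (hA i)) hei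
            (Set.subset_univ _)
        · simp only [if_neg hei]
          exact isArbM_of_subset (Set.subset_univ _) (isArbM_congr hdcongr (hA i))
    · intro g _
      rw [Fin.sum_univ_add]
      simp only [Fin.addCases_left, Fin.addCases_right]
      by_cases hge : g = e
      · subst hge
        have h1 : ∑ i, (if g ∈ A i then μ i else 0) = c * S := by
          rw [hS_def, Finset.mul_sum]
          refine Finset.sum_congr rfl fun i _ => ?_
          simp only [hμ]
          by_cases hei : g ∈ A i
          · simp only [if_pos hei]
          · simp only [if_neg hei, mul_zero]
        have h2 : ∑ i, (if g ∈ B₂ i then ν i else 0) = 0 := by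
          refine Finset.sum_eq_zero fun i _ => ?_
          simp only [hB₂]
          by_cases hei : g ∈ A i
          · simp only [if_pos hei]
            have : g ∉ (A i \ {g}) ∪ {f} := by
              rintro (⟨-, h⟩ | h)
              · exact h rfl
              · rw [Set.mem_singleton_iff] at h; exact hef h
            rw [if_neg this]
          · simp only [if_neg hei]
        rw [h1, h2, add_zero]
        exact hcS
      · by_cases hgf : g = f
        · subst hgf
          have h1 : ∑ i, (if g ∈ A i then μ i else 0) = 0 := by
            refine Finset.sum_eq_zero fun i _ => ?_
            have : g ∉ A i := fun h => ((hA i).1 h) rfl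
            rw [if_neg this]
          have h2 : ∑ i, (if g ∈ B₂ i then ν i else 0) = (1 - c) * S := by
            rw [hS_def, Finset.mul_sum]
            refine Finset.sum_congr rfl fun i _ => ?_
            simp only [hB₂, hν]
            by_cases hei : e ∈ A i
            · simp only [if_pos hei]
              have : g ∈ (A i \ {e}) ∪ {g} := Or.inr rfl
              rw [if_pos this]
            · simp only [if_neg hei]
              have : g ∉ A i := fun h => ((hA i).1 h) rfl
              rw [if_neg this, mul_zero]
          rw [h1, h2, zero_add]
          exact h1cS
        · have hkey : ∀ i, (if g ∈ A i then μ i else 0) + (if g ∈ B₂ i then ν i else 0)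
              = (if g ∈ A i then lam i else 0) := by
            intro i
            have hmem : (g ∈ B₂ i) ↔ g ∈ A i := by
              simp only [hB₂]
              by_cases hei : e ∈ A i
              · simp only [if_pos hei]
                constructor
                · rintro (⟨h, -⟩ | h)
                  · exact h
                  · rw [Set.mem_singleton_iff] at h; exact absurd h hgf
                · exact fun h => Or.inl ⟨h, hge⟩
              · simp only [if_neg hei]
            simp only [hmem]
            by_cases h : g ∈ A i
            · simp only [if_pos h]; exact hμν i
            · simp only [if_neg h, add_zero]
          calc (∑ i, (if g ∈ A i then μ i else 0)) + ∑ i, (if g ∈ B₂ i then ν i else 0)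
              = ∑ i, ((if g ∈ A i then μ i else 0) + (if g ∈ B₂ i then ν i else 0)) :=
                Finset.sum_add_distrib.symm
            _ = ∑ i, (if g ∈ A i then lam i else 0) :=
                Finset.sum_congr rfl fun i _ => hkey i
            _ ≤ w g := by
                have := hcap g hgf
                rwa [if_neg hge] at this
    · rw [hx, Fin.sum_univ_add]
      simp only [Fin.addCases_left, Fin.addCases_right]
      rw [← Finset.sum_add_distrib]
      exact (Finset.sum_congr rfl fun i _ => (hμν i).symm)
end

section
/- Let G = G₁ ⊕ G₂ be the 1-sum of two graphs G₁ and G₂ glued at a single common vertex v, with nonnegative edge weights w whose restrictions to E(Gᵢ) are wᵢ. Then for any vertex v₁ ∈ V(G₁), k(G, w, v₁) = min{ k(G₁, w₁, v₁), k(G₂, w₂, v) }. -/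
open scoped Classical

variable {V E : Type*}

noncomputable def psum {t : ℕ} (l : Fin t → ℝ) : ℕ → ℝ :=
  fun n => ∑ k ∈ Finset.range n, (if h : k < t then l ⟨k, h⟩ else 0)

lemma psum_nonneg {t : ℕ} {l : Fin t → ℝ} (hl : ∀ i, 0 ≤ l i) (n : ℕ) : 0 ≤ psum l n := by
  apply Finset.sum_nonneg
  intro k _
  split
  · exact hl _
  · exact le_rfl

lemma psum_mono {t : ℕ} {l : Fin t → ℝ} (hl : ∀ i, 0 ≤ l i) {m n : ℕ} (h : m ≤ n) :
    psum l m ≤ psum l n := by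
  apply Finset.sum_le_sum_of_subset_of_nonneg (Finset.range_subset_range.2 h)
  intro k _ _
  split
  · exact hl _
  · exact le_rfl

lemma psum_zero {t : ℕ} (l : Fin t → ℝ) : psum l 0 = 0 := by simp [psum]

lemma psum_top {t : ℕ} (l : Fin t → ℝ) : psum l t = ∑ i, l i := by
  rw [psum, ← Fin.sum_univ_eq_sum_range]
  apply Finset.sum_congr rfl
  intro i _
  simp [i.isLt]

lemma psum_succ {t : ℕ} (l : Fin t → ℝ) (i : Fin t) :
    psum l (i.1 + 1) = psum l i.1 + l i := by
  rw [psum, Finset.sum_range_succ]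
  simp [psum, i.isLt]

lemma min_sub_min_le {a b c : ℝ} (hbc : b ≤ c) : min a c - min a b ≤ c - b := by
  rcases le_total a b with h | h
  · rw [min_eq_left h, min_eq_left (h.trans hbc)]
    linarith
  · rw [min_eq_right h]
    have := min_le_right a c
    linarith

lemma pack_merge {t₁ t₂ : ℕ} (l₁ : Fin t₁ → ℝ) (l₂ : Fin t₂ → ℝ)
    (h₁ : ∀ i, 0 ≤ l₁ i) (h₂ : ∀ j, 0 ≤ l₂ j) (hle : ∑ i, l₁ i ≤ ∑ j, l₂ j) :
    ∃ μ : Fin t₁ → Fin t₂ → ℝ, (∀ i j, 0 ≤ μ i j) ∧ (∀ i, ∑ j, μ i j = l₁ i) ∧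
      (∀ j, ∑ i, μ i j ≤ l₂ j) := by
  set A := psum l₁ with hA
  set B := psum l₂ with hB
  have hAmono : ∀ {m n : ℕ}, m ≤ n → A m ≤ A n := fun h => psum_mono h₁ h
  have hBmono : ∀ {m n : ℕ}, m ≤ n → B m ≤ B n := fun h => psum_mono h₂ h
  have hA0 : ∀ n, 0 ≤ A n := psum_nonneg h₁
  have hB0 : ∀ n, 0 ≤ B n := psum_nonneg h₂
  set clamp : ℕ → ℝ → ℝ := fun n t => max (A n) (min (A (n + 1)) t) with hclamp
  have clamp_mono : ∀ n {s u : ℝ}, s ≤ u → clamp n s ≤ clamp n u := by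
    intro n s u hsu
    exact max_le_max le_rfl (min_le_min le_rfl hsu)
  -- clamp identity
  have clamp_eq : ∀ (n : ℕ) (h : n < t₁) (u : ℝ),
      clamp n u = A n + min (A (n + 1)) u - min (A n) u := by
    intro n h u
    have h1 : min (A n) (min (A (n + 1)) u) = min (A n) u := by
      rw [← min_assoc, min_eq_left (hAmono (Nat.le_succ n))]
    have h2 := max_add_min (A n) (min (A (n + 1)) u)
    rw [h1] at h2
    simp only [hclamp]
    linarith
  refine ⟨fun i j => clamp i.1 (B (j.1 + 1)) - clamp i.1 (B j.1), ?_, ?_, ?_⟩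
  · intro i j
    have := clamp_mono i.1 (hBmono (Nat.le_succ j.1))
    dsimp only
    linarith
  · intro i
    rw [Fin.sum_univ_eq_sum_range (fun j => clamp i.1 (B (j + 1)) - clamp i.1 (B j)) t₂,
      Finset.sum_range_sub (fun j => clamp i.1 (B j)) t₂]
    have hx1 : A t₁ = ∑ i, l₁ i := psum_top l₁
    have hx2 : B t₂ = ∑ j, l₂ j := psum_top l₂
    have hBt : A (i.1 + 1) ≤ B t₂ := by
      rw [hx2]
      exact le_trans (hx1 ▸ hAmono i.isLt) hle
    have e1 : clamp i.1 (B t₂) = A (i.1 + 1) := by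
      simp only [hclamp]
      rw [min_eq_left hBt, max_eq_right (hAmono (Nat.le_succ i.1))]
    have e2 : clamp i.1 (B 0) = A i.1 := by
      simp only [hclamp, hB, psum_zero]
      rw [min_eq_right (hA0 _), max_eq_left (hA0 _)]
    rw [e1, e2, hA, psum_succ]
    ring
  · intro j
    have key : ∀ u : ℝ, 0 ≤ u →
        ∑ i : Fin t₁, clamp i.1 u = (∑ i : Fin t₁, A i.1) + min (A t₁) u := by
      intro u hu
      have : ∀ i : Fin t₁, clamp i.1 u = A i.1 + (min (A (i.1 + 1)) u - min (A i.1) u) := by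
        intro i
        rw [clamp_eq i.1 i.isLt u]; ring
      rw [Finset.sum_congr rfl (fun i _ => this i), Finset.sum_add_distrib]
      congr 1
      rw [Fin.sum_univ_eq_sum_range (fun n => min (A (n + 1)) u - min (A n) u) t₁,
        Finset.sum_range_sub (fun n => min (A n) u) t₁]
      rw [hA, psum_zero, min_eq_left hu]
      ring
    have hsum : ∑ i : Fin t₁, (clamp i.1 (B (j.1 + 1)) - clamp i.1 (B j.1))
        = min (A t₁) (B (j.1 + 1)) - min (A t₁) (B j.1) := by
      rw [Finset.sum_sub_distrib, key _ (hB0 _), key _ (hB0 _)]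
      ring
    rw [hsum]
    have := min_sub_min_le (a := A t₁) (hBmono (Nat.le_succ j.1))
    have hstep : B (j.1 + 1) - B j.1 = l₂ j := by rw [hB, psum_succ]; ring
    linarith

lemma tg_end {V : Type*} {R : V → V → Prop} {S : Set V}
    (hm : ∀ a b, R a b → a ∈ S ∧ b ∈ S) {a b : V} (h : Relation.TransGen R a b) : b ∈ S := by
  cases h with
  | single h => exact (hm _ _ h).2
  | tail _ h => exact (hm _ _ h).2

lemma tg_start {V : Type*} {R : V → V → Prop} {S : Set V}
    (hm : ∀ a b, R a b → a ∈ S ∧ b ∈ S) {a b : V} (h : Relation.TransGen R a b) : a ∈ S := by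
  induction h with
  | single h => exact (hm _ _ h).1
  | tail _ _ ih => exact ih

lemma union_acyclic {V : Type*} {R₁ R₂ : V → V → Prop} {S₁ S₂ : Set V} {v : V}
    (hm₁ : ∀ a b, R₁ a b → a ∈ S₁ ∧ b ∈ S₁) (hm₂ : ∀ a b, R₂ a b → a ∈ S₂ ∧ b ∈ S₂)
    (hIv : ∀ x, x ∈ S₁ → x ∈ S₂ → x = v)
    (h₁ : ∀ x, ¬ Relation.TransGen R₁ x x) (h₂ : ∀ x, ¬ Relation.TransGen R₂ x x)
    (u : V) : ¬ Relation.TransGen (fun a b => R₁ a b ∨ R₂ a b) u u := by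
  have key : ∀ a b : V, Relation.TransGen (fun a b => R₁ a b ∨ R₂ a b) a b →
      Relation.TransGen R₁ a b ∨ Relation.TransGen R₂ a b ∨
      (Relation.TransGen R₁ a v ∧ Relation.TransGen R₂ v b) ∨
      (Relation.TransGen R₂ a v ∧ Relation.TransGen R₁ v b) := by
    intro a b h
    induction h with
    | single h =>
      rcases h with h | h
      · exact Or.inl (Relation.TransGen.single h)
      · exact Or.inr (Or.inl (Relation.TransGen.single h))
    | @tail b c hab hbc ih =>
      rcases ih with ih | ih | ⟨ih₁, ih₂⟩ | ⟨ih₁, ih₂⟩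
      · rcases hbc with h | h
        · exact Or.inl (ih.tail h)
        · have hbv : b = v := hIv b (tg_end hm₁ ih) (hm₂ _ _ h).1
          exact Or.inr (Or.inr (Or.inl ⟨hbv ▸ ih, Relation.TransGen.single (hbv ▸ h)⟩))
      · rcases hbc with h | h
        · have hbv : b = v := hIv b (hm₁ _ _ h).1 (tg_end hm₂ ih)
          exact Or.inr (Or.inr (Or.inr ⟨hbv ▸ ih, Relation.TransGen.single (hbv ▸ h)⟩))
        · exact Or.inr (Or.inl (ih.tail h))
      · rcases hbc with h | h
        · have hbv : b = v := hIv b (hm₁ _ _ h).1 (tg_end hm₂ ih₂)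
          exact absurd (hbv ▸ ih₂) (h₂ v)
        · exact Or.inr (Or.inr (Or.inl ⟨ih₁, ih₂.tail h⟩))
      · rcases hbc with h | h
        · exact Or.inr (Or.inr (Or.inr ⟨ih₁, ih₂.tail h⟩))
        · have hbv : b = v := hIv b (tg_end hm₁ ih₂) (hm₂ _ _ h).1
          exact absurd (hbv ▸ ih₂) (h₁ v)
  intro h
  rcases key u u h with h' | h' | ⟨h₁', h₂'⟩ | ⟨h₁', h₂'⟩
  · exact h₁ u h'
  · exact h₂ u h'
  · have huv : u = v := hIv u (tg_start hm₁ h₁') (tg_end hm₂ h₂')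
    exact h₁ v (huv ▸ h₁')
  · have huv : u = v := hIv u (tg_end hm₁ h₂') (tg_start hm₂ h₁')
    exact h₂ v (huv ▸ h₁')


def KSet [Fintype E] (ends : E → Sym2 V) (F : Set E) (S : Set V) (w : E → ℝ) (r : V) :
    Set ℝ :=
  {x : ℝ | ∃ d : E → V × V, IsOrientation ends F d ∧ AcyclicOn ends F d ∧
    RootedAt ends F S d r ∧
    ∃ (t : ℕ) (lam : Fin t → ℝ) (A : Fin t → Set E),
      (∀ i, 0 ≤ lam i) ∧ (∀ i, IsArbM ends F S d r (A i)) ∧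
      (∀ e ∈ F, ∑ i, (if e ∈ A i then lam i else 0) ≤ w e) ∧
      x = ∑ i, lam i}

lemma kOn_eq_sSup [Fintype E] (ends : E → Sym2 V) (F : Set E) (S : Set V) (w : E → ℝ)
    (r : V) : kOn ends F S w r = sSup (KSet ends F S w r) := rfl

lemma KSet_nonneg [Fintype E] {ends : E → Sym2 V} {F : Set E} {S : Set V} {w : E → ℝ}
    {r : V} {x : ℝ} (hx : x ∈ KSet ends F S w r) : 0 ≤ x := by
  obtain ⟨d, -, -, -, t, lam, A, hlam, -, -, hxv⟩ := hx
  rw [hxv]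
  exact Finset.sum_nonneg fun i _ => hlam i

lemma KSet_bdd [Fintype E] {ends : E → Sym2 V} {F : Set E} {S : Set V} {w : E → ℝ}
    {r : V} (hw : ∀ e, 0 ≤ w e) (hex : ∃ u ∈ S, u ≠ r) {x : ℝ}
    (hx : x ∈ KSet ends F S w r) : x ≤ ∑ e, w e := by
  obtain ⟨d, -, -, -, t, lam, A, hlam, hA, hcap, hxv⟩ := hx
  obtain ⟨u, hu, hur⟩ := hex
  have hne : ∀ i, ∃ e, e ∈ A i := by
    intro i
    obtain ⟨e, ⟨he, -⟩, -⟩ := (hA i).2.2.1 u hu hur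
    exact ⟨e, he⟩
  have h1 : ∀ i, lam i ≤ ∑ e, (if e ∈ A i then lam i else 0) := by
    intro i
    obtain ⟨e₀, he₀⟩ := hne i
    have := Finset.single_le_sum (f := fun e => if e ∈ A i then lam i else 0)
      (fun e _ => by split <;> [exact hlam i; exact le_rfl]) (Finset.mem_univ e₀)
    simpa [he₀] using this
  calc x = ∑ i, lam i := hxv
    _ ≤ ∑ i, ∑ e, (if e ∈ A i then lam i else 0) := Finset.sum_le_sum fun i _ => h1 i
    _ = ∑ e, ∑ i, (if e ∈ A i then lam i else 0) := Finset.sum_comm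
    _ ≤ ∑ e, w e := by
        apply Finset.sum_le_sum
        intro e _
        by_cases heF : e ∈ F
        · exact hcap e heF
        · have : ∀ i : Fin t, (if e ∈ A i then lam i else 0) = 0 := by
            intro i
            rw [if_neg (fun hmem => heF ((hA i).1 hmem))]
          rw [Finset.sum_congr rfl fun i _ => this i]
          simpa using hw e

lemma arc_mem {ends : E → Sym2 V} {F : Set E} {S : Set V} {d : E → V × V}
    (hor : IsOrientation ends F d) (hE : ∀ e ∈ F, ∀ x ∈ ends e, x ∈ S) {a b : V}
    (h : arcRel ends F d a b) : a ∈ S ∧ b ∈ S := by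
  obtain ⟨e, he, hnd, hde⟩ := h
  have hends := hor e he hnd
  have ha : a ∈ ends e := by rw [hends, hde]; simp
  have hb : b ∈ ends e := by rw [hends, hde]; simp
  exact ⟨hE e he a ha, hE e he b hb⟩

-- MORE
set_option linter.unusedSectionVars false

section OneSum

variable [Fintype V] [Fintype E] {ends : E → Sym2 V} {w : E → ℝ}
  {S₁ S₂ : Set V} {E₁ : Set E} {v v₁ : V}

lemma arc_mono {F : Set E} {d : E → V × V} {a b : V} (h : arcRel ends F d a b) :
    arcRel ends Set.univ d a b := by
  obtain ⟨e, _, h1, h2⟩ := h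
  exact ⟨e, Set.mem_univ e, h1, h2⟩

lemma no_arc_into_v (hI : S₁ ∩ S₂ = {v}) (hv₁ : v₁ ∈ S₁)
    (hE₁ : ∀ e ∈ E₁, ∀ x ∈ ends e, x ∈ S₁) (hE₂ : ∀ e ∈ E₁ᶜ, ∀ x ∈ ends e, x ∈ S₂)
    {d : E → V × V} (hor : IsOrientation ends Set.univ d)
    (hac : AcyclicOn ends Set.univ d) (hrt : RootedAt ends Set.univ Set.univ d v₁) :
    ∀ u, ¬ arcRel ends E₁ᶜ d u v := by
  have hv₂ : v ∈ S₂ := by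
    have : v ∈ S₁ ∩ S₂ := by rw [hI]; rfl
    exact this.2
  have horc : IsOrientation ends E₁ᶜ d := fun e _ => hor e (Set.mem_univ e)
  have hor₁ : IsOrientation ends E₁ d := fun e _ => hor e (Set.mem_univ e)
  have hirr : ∀ x, ¬ Relation.TransGen (arcRel ends E₁ᶜ d) x x := fun x h =>
    hac x (Relation.TransGen.mono (fun a b hab => arc_mono hab) _ _ h)
  letI : IsTrans V (Relation.TransGen (arcRel ends E₁ᶜ d)) :=
    ⟨fun _ _ _ h h' => h.trans h'⟩
  letI : IsIrrefl V (Relation.TransGen (arcRel ends E₁ᶜ d)) := ⟨hirr⟩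
  have hwf : WellFounded (Relation.TransGen (arcRel ends E₁ᶜ d)) :=
    Finite.wellFounded_of_trans_of_irrefl _
  obtain ⟨m, hmS, hmin⟩ := hwf.has_min S₂ ⟨v, hv₂⟩
  have hsrc : ∀ u, ¬ arcRel ends E₁ᶜ d u m := fun u h =>
    hmin u (arc_mem horc hE₂ h).1 (Relation.TransGen.single h)
  have hmv : m = v := by
    by_contra hne
    have hmS₁ : m ∉ S₁ := by
      intro h
      have : m ∈ S₁ ∩ S₂ := ⟨h, hmS⟩
      rw [hI] at this
      exact hne this
    have hmv₁ : m = v₁ := by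
      apply hrt.2.2 m (Set.mem_univ m)
      intro a harc
      obtain ⟨e, -, hnd, hde⟩ := harc
      by_cases heE : e ∈ E₁
      · exact hmS₁ (arc_mem hor₁ hE₁ ⟨e, heE, hnd, hde⟩).2
      · exact hsrc a ⟨e, heE, hnd, hde⟩
    exact hmS₁ (hmv₁ ▸ hv₁)
  exact hmv ▸ hsrc

lemma restrict₁ (hI : S₁ ∩ S₂ = {v}) (hv₁ : v₁ ∈ S₁)
    (hE₁ : ∀ e ∈ E₁, ∀ x ∈ ends e, x ∈ S₁) (hE₂ : ∀ e ∈ E₁ᶜ, ∀ x ∈ ends e, x ∈ S₂)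
    {x : ℝ} (hx : x ∈ KSet ends Set.univ Set.univ w v₁) : x ∈ KSet ends E₁ S₁ w v₁ := by
  obtain ⟨d, hor, hac, hrt, t, lam, A, hlam, hA, hcap, hxv⟩ := hx
  have hnav : ∀ u, ¬ arcRel ends E₁ᶜ d u v := no_arc_into_v hI hv₁ hE₁ hE₂ hor hac hrt
  have hor₁ : IsOrientation ends E₁ d := fun e _ => hor e (Set.mem_univ e)
  have horc : IsOrientation ends E₁ᶜ d := fun e _ => hor e (Set.mem_univ e)
  refine ⟨d, hor₁, ?_, ?_, t, lam, fun i => A i ∩ E₁, hlam, ?_, ?_, hxv⟩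
  · exact fun x h => hac x (Relation.TransGen.mono (fun a b hab => arc_mono hab) _ _ h)
  · refine ⟨hv₁, fun u h => hrt.2.1 u (arc_mono h), ?_⟩
    intro u huS hsrcE₁
    apply hrt.2.2 u (Set.mem_univ u)
    intro a harc
    obtain ⟨e, -, hnd, hde⟩ := harc
    by_cases heE : e ∈ E₁
    · exact hsrcE₁ a ⟨e, heE, hnd, hde⟩
    · have harc2 : arcRel ends E₁ᶜ d a u := ⟨e, heE, hnd, hde⟩
      have huv : u = v := by
        have : u ∈ S₁ ∩ S₂ := ⟨huS, (arc_mem horc hE₂ harc2).2⟩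
        rw [hI] at this; exact this
      exact hnav a (huv ▸ harc2)
  · intro i
    obtain ⟨hsub, hnd, huniq, hmem, hreach⟩ := hA i
    have hin : ∀ e ∈ A i, (d e).2 ∈ S₁ → e ∈ E₁ := by
      intro e he hhead
      by_contra heE
      have harc : arcRel ends E₁ᶜ d (d e).1 (d e).2 := ⟨e, heE, hnd e he, rfl⟩
      have hv' : (d e).2 = v := by
        have : (d e).2 ∈ S₁ ∩ S₂ := ⟨hhead, (arc_mem horc hE₂ harc).2⟩
        rw [hI] at this; exact this
      exact hnav (d e).1 (hv' ▸ harc)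
    have htail : ∀ e ∈ A i, e ∈ E₁ → (d e).1 ∈ S₁ ∧ (d e).2 ∈ S₁ := by
      intro e he heE
      exact arc_mem hor₁ hE₁ ⟨e, heE, hnd e he, rfl⟩
    refine ⟨fun e he => he.2, fun e he => hnd e he.1, ?_, ?_, ?_⟩
    · intro u huS hune
      obtain ⟨e, ⟨heA, hhead⟩, huni⟩ := huniq u (Set.mem_univ u) hune
      have heE : e ∈ E₁ := hin e heA (by rw [hhead]; exact huS)
      exact ⟨e, ⟨⟨heA, heE⟩, hhead⟩, fun e' he' => huni e' ⟨he'.1.1, he'.2⟩⟩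
    · intro e he
      exact ⟨(htail e he.1 he.2).1, (htail e he.1 he.2).2, (hmem e he.1).2.2⟩
    · intro u huS
      have key : ∀ u', Relation.ReflTransGen (fun a b => ∃ e ∈ A i, d e = (a, b)) v₁ u' →
          u' ∈ S₁ →
          Relation.ReflTransGen (fun a b => ∃ e ∈ A i ∩ E₁, d e = (a, b)) v₁ u' := by
        intro u' h
        induction h with
        | refl => intro _; exact Relation.ReflTransGen.refl
        | @tail b c hab hbc ih =>
          intro hcS
          obtain ⟨e, heA, hde⟩ := hbc
          have hhead : (d e).2 ∈ S₁ := by rw [hde]; exact hcS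
          have heE : e ∈ E₁ := hin e heA hhead
          have hbS : b ∈ S₁ := by
            have := (htail e heA heE).1
            rwa [hde] at this
          exact (ih hbS).tail ⟨e, ⟨heA, heE⟩, hde⟩
      exact key u (hreach u (Set.mem_univ u)) huS
  · intro e heE
    dsimp only
    refine le_trans (le_of_eq (Finset.sum_congr rfl fun i _ => ?_)) (hcap e (Set.mem_univ e))
    by_cases h : e ∈ A i <;> simp [h, heE]

lemma restrict₂ (hI : S₁ ∩ S₂ = {v}) (hv₁ : v₁ ∈ S₁)
    (hE₁ : ∀ e ∈ E₁, ∀ x ∈ ends e, x ∈ S₁) (hE₂ : ∀ e ∈ E₁ᶜ, ∀ x ∈ ends e, x ∈ S₂)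
    {x : ℝ} (hx : x ∈ KSet ends Set.univ Set.univ w v₁) : x ∈ KSet ends E₁ᶜ S₂ w v := by
  obtain ⟨d, hor, hac, hrt, t, lam, A, hlam, hA, hcap, hxv⟩ := hx
  have hnav : ∀ u, ¬ arcRel ends E₁ᶜ d u v := no_arc_into_v hI hv₁ hE₁ hE₂ hor hac hrt
  have hor₁ : IsOrientation ends E₁ d := fun e _ => hor e (Set.mem_univ e)
  have horc : IsOrientation ends E₁ᶜ d := fun e _ => hor e (Set.mem_univ e)
  have hv₂ : v ∈ S₂ := by
    have : v ∈ S₁ ∩ S₂ := by rw [hI]; rfl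
    exact this.2
  refine ⟨d, horc, ?_, ?_, t, lam, fun i => A i ∩ E₁ᶜ, hlam, ?_, ?_, hxv⟩
  · exact fun x h => hac x (Relation.TransGen.mono (fun a b hab => arc_mono hab) _ _ h)
  · refine ⟨hv₂, hnav, ?_⟩
    intro u huS hsrc
    by_contra hne
    have huS₁ : u ∉ S₁ := by
      intro h
      have : u ∈ S₁ ∩ S₂ := ⟨h, huS⟩
      rw [hI] at this
      exact hne this
    have huv₁ : u = v₁ := by
      apply hrt.2.2 u (Set.mem_univ u)
      intro a harc
      obtain ⟨e, -, hnd, hde⟩ := harc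
      by_cases heE : e ∈ E₁
      · exact huS₁ (arc_mem hor₁ hE₁ ⟨e, heE, hnd, hde⟩).2
      · exact hsrc a ⟨e, heE, hnd, hde⟩
    exact huS₁ (huv₁ ▸ hv₁)
  · intro i
    obtain ⟨hsub, hnd, huniq, hmem, hreach⟩ := hA i
    have hin : ∀ e ∈ A i, (d e).2 ∈ S₂ → (d e).2 ≠ v → e ∈ E₁ᶜ := by
      intro e he hhS hnev heE
      apply hnev
      have : (d e).2 ∈ S₁ ∩ S₂ :=
        ⟨(arc_mem hor₁ hE₁ ⟨e, heE, hnd e he, rfl⟩).2, hhS⟩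
      rw [hI] at this; exact this
    refine ⟨fun e he => he.2, fun e he => hnd e he.1, ?_, ?_, ?_⟩
    · intro u huS hunv
      have hunv₁ : u ≠ v₁ := by
        intro h
        apply hunv
        have : u ∈ S₁ ∩ S₂ := ⟨h ▸ hv₁, huS⟩
        rw [hI] at this; exact this
      obtain ⟨e, ⟨heA, hhead⟩, huni⟩ := huniq u (Set.mem_univ u) hunv₁
      have heE : e ∈ E₁ᶜ := hin e heA (by rw [hhead]; exact huS) (by rw [hhead]; exact hunv)
      exact ⟨e, ⟨⟨heA, heE⟩, hhead⟩, fun e' he' => huni e' ⟨he'.1.1, he'.2⟩⟩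
    · intro e he
      have harc : arcRel ends E₁ᶜ d (d e).1 (d e).2 := ⟨e, he.2, hnd e he.1, rfl⟩
      have hm := arc_mem horc hE₂ harc
      exact ⟨hm.1, hm.2, fun h => hnav (d e).1 (h ▸ harc)⟩
    · intro u huS
      have key : ∀ u', Relation.ReflTransGen (fun a b => ∃ e ∈ A i, d e = (a, b)) v₁ u' →
          u' ∈ S₂ →
          Relation.ReflTransGen (fun a b => ∃ e ∈ A i ∩ E₁ᶜ, d e = (a, b)) v u' := by
        intro u' h
        induction h with
        | refl =>
          intro hS
          have hv₁v : v₁ = v := by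
            have : v₁ ∈ S₁ ∩ S₂ := ⟨hv₁, hS⟩
            rw [hI] at this; exact this
          rw [hv₁v]
        | @tail b c hab hbc ih =>
          intro hcS
          obtain ⟨e, heA, hde⟩ := hbc
          by_cases hcv : c = v
          · rw [hcv]
          · have heE : e ∈ E₁ᶜ :=
              hin e heA (by rw [hde]; exact hcS) (by rw [hde]; exact hcv)
            have hbS : b ∈ S₂ := by
              have := (arc_mem horc hE₂ ⟨e, heE, hnd e heA, rfl⟩).1
              rwa [hde] at this
            exact (ih hbS).tail ⟨e, ⟨heA, heE⟩, hde⟩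
      exact key u (hreach u (Set.mem_univ u)) huS
  · intro e heE
    dsimp only
    refine le_trans (le_of_eq (Finset.sum_congr rfl fun i _ => ?_)) (hcap e (Set.mem_univ e))
    by_cases h : e ∈ A i <;> simp [h, heE]

lemma combine (hU : S₁ ∪ S₂ = Set.univ) (hI : S₁ ∩ S₂ = {v}) (hv₁ : v₁ ∈ S₁)
    (hE₁ : ∀ e ∈ E₁, ∀ x ∈ ends e, x ∈ S₁) (hE₂ : ∀ e ∈ E₁ᶜ, ∀ x ∈ ends e, x ∈ S₂)
    {x₁ x₂ : ℝ} (hx₁ : x₁ ∈ KSet ends E₁ S₁ w v₁) (hx₂ : x₂ ∈ KSet ends E₁ᶜ S₂ w v) :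
    min x₁ x₂ ∈ KSet ends Set.univ Set.univ w v₁ := by
  obtain ⟨d₁, hor₁, hac₁, hrt₁, t₁, lam₁, A₁, hlam₁, hA₁, hcap₁, hxv₁⟩ := hx₁
  obtain ⟨d₂, hor₂, hac₂, hrt₂, t₂, lam₂, A₂, hlam₂, hA₂, hcap₂, hxv₂⟩ := hx₂
  have hvI : v ∈ S₁ ∩ S₂ := by rw [hI]; rfl
  have hv₂ : v ∈ S₂ := hvI.2
  have hvS₁ : v ∈ S₁ := hvI.1
  have hIv : ∀ x, x ∈ S₁ → x ∈ S₂ → x = v := by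
    intro x h1 h2
    have : x ∈ S₁ ∩ S₂ := ⟨h1, h2⟩
    rw [hI] at this; exact this
  have hUS : ∀ u : V, u ∈ S₁ ∨ u ∈ S₂ := by
    intro u
    have : u ∈ S₁ ∪ S₂ := by rw [hU]; exact Set.mem_univ u
    exact this
  set d : E → V × V := fun e => if e ∈ E₁ then d₁ e else d₂ e with hd
  have hd1 : ∀ e ∈ E₁, d e = d₁ e := fun e he => if_pos he
  have hd2 : ∀ e ∈ E₁ᶜ, d e = d₂ e := fun e he => if_neg he
  have harcU : ∀ a b, arcRel ends Set.univ d a b ↔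
      (arcRel ends E₁ d₁ a b ∨ arcRel ends E₁ᶜ d₂ a b) := by
    intro a b
    constructor
    · rintro ⟨e, -, h1, h2⟩
      by_cases he : e ∈ E₁
      · exact Or.inl ⟨e, he, h1, by rwa [hd1 e he] at h2⟩
      · exact Or.inr ⟨e, he, h1, by rwa [hd2 e he] at h2⟩
    · rintro (⟨e, he, h1, h2⟩ | ⟨e, he, h1, h2⟩)
      · exact ⟨e, Set.mem_univ e, h1, by rw [hd1 e he]; exact h2⟩
      · exact ⟨e, Set.mem_univ e, h1, by rw [hd2 e he]; exact h2⟩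
  obtain ⟨μ, hμ0, hμr, hμc, hμt⟩ :
      ∃ μ : Fin t₁ → Fin t₂ → ℝ, (∀ i j, 0 ≤ μ i j) ∧ (∀ i, ∑ j, μ i j ≤ lam₁ i) ∧
        (∀ j, ∑ i, μ i j ≤ lam₂ j) ∧ (∑ i, ∑ j, μ i j) = min x₁ x₂ := by
    rcases le_total x₁ x₂ with hle | hle
    · obtain ⟨ν, h0, hr, hc⟩ := pack_merge lam₁ lam₂ hlam₁ hlam₂
        (by rw [← hxv₁, ← hxv₂]; exact hle)
      refine ⟨ν, h0, fun i => le_of_eq (hr i), hc, ?_⟩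
      rw [min_eq_left hle, hxv₁]
      exact Finset.sum_congr rfl fun i _ => hr i
    · obtain ⟨ν, h0, hr, hc⟩ := pack_merge lam₂ lam₁ hlam₂ hlam₁
        (by rw [← hxv₁, ← hxv₂]; exact hle)
      refine ⟨fun i j => ν j i, fun i j => h0 j i, fun i => hc i, fun j => le_of_eq (hr j), ?_⟩
      rw [min_eq_right hle, hxv₂, Finset.sum_comm]
      exact Finset.sum_congr rfl fun j _ => hr j
  have hsum_conv : ∀ f : Fin t₁ × Fin t₂ → ℝ,
      (∑ k : Fin (t₁ * t₂), f (finProdFinEquiv.symm k)) = ∑ i, ∑ j, f (i, j) := by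
    intro f
    rw [Equiv.sum_comp (finProdFinEquiv.symm : Fin (t₁ * t₂) ≃ Fin t₁ × Fin t₂) f,
      Fintype.sum_prod_type]
  refine ⟨d, ?_, ?_, ?_, t₁ * t₂,
    fun k => μ (finProdFinEquiv.symm k).1 (finProdFinEquiv.symm k).2,
    fun k => A₁ (finProdFinEquiv.symm k).1 ∪ A₂ (finProdFinEquiv.symm k).2,
    fun k => hμ0 _ _, ?_, ?_, ?_⟩
  · intro e _ hnd
    by_cases he : e ∈ E₁
    · rw [hd1 e he]; exact hor₁ e he hnd
    · rw [hd2 e he]; exact hor₂ e he hnd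
  · intro x h
    refine union_acyclic (v := v) (fun a b hab => arc_mem hor₁ hE₁ hab)
      (fun a b hab => arc_mem hor₂ hE₂ hab) hIv hac₁ hac₂ x ?_
    exact Relation.TransGen.mono (fun a b hab => (harcU a b).1 hab) _ _ h
  · refine ⟨Set.mem_univ v₁, ?_, ?_⟩
    · intro u h
      rcases (harcU u v₁).1 h with h' | h'
      · exact hrt₁.2.1 u h'
      · have hv₁v : v₁ = v := hIv v₁ hv₁ (arc_mem hor₂ hE₂ h').2
        exact hrt₂.2.1 u (hv₁v ▸ h')
    · intro u _ hsrc
      rcases hUS u with hu | hu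
      · exact hrt₁.2.2 u hu fun a ha => hsrc a ((harcU a u).2 (Or.inl ha))
      · have huv : u = v := hrt₂.2.2 u hu fun a ha => hsrc a ((harcU a u).2 (Or.inr ha))
        subst huv
        exact hrt₁.2.2 u hvS₁ fun a ha => hsrc a ((harcU a u).2 (Or.inl ha))
  · intro k
    obtain ⟨hs₁, hnd₁, hu₁, hm₁, hr₁⟩ := hA₁ (finProdFinEquiv.symm k).1
    obtain ⟨hs₂, hnd₂, hu₂, hm₂, hr₂⟩ := hA₂ (finProdFinEquiv.symm k).2
    set i := (finProdFinEquiv.symm k).1 with hi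
    set j := (finProdFinEquiv.symm k).2 with hj
    have hdA₁ : ∀ e ∈ A₁ i, d e = d₁ e := fun e he => hd1 e (hs₁ he)
    have hdA₂ : ∀ e ∈ A₂ j, d e = d₂ e := fun e he => hd2 e (hs₂ he)
    have hhead₁ : ∀ e ∈ A₁ i, (d e).2 ∈ S₁ ∧ (d e).2 ≠ v₁ := by
      intro e he
      rw [hdA₁ e he]
      exact ⟨(hm₁ e he).2.1, (hm₁ e he).2.2⟩
    have hhead₂ : ∀ e ∈ A₂ j, (d e).2 ∈ S₂ ∧ (d e).2 ≠ v := by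
      intro e he
      rw [hdA₂ e he]
      exact ⟨(hm₂ e he).2.1, (hm₂ e he).2.2⟩
    refine ⟨fun e _ => Set.mem_univ e, ?_, ?_, ?_, ?_⟩
    · rintro e (he | he)
      exacts [hnd₁ e he, hnd₂ e he]
    · intro u _ hune
      by_cases huS₁ : u ∈ S₁
      · obtain ⟨e, ⟨heA, hh⟩, huni⟩ := hu₁ u huS₁ hune
        refine ⟨e, ⟨Or.inl heA, by rw [hdA₁ e heA]; exact hh⟩, ?_⟩
        rintro e' ⟨(he' | he'), hh'⟩
        · exact huni e' ⟨he', by rwa [hdA₁ e' he'] at hh'⟩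
        · exfalso
          have hh2 := hhead₂ e' he'
          rw [hh'] at hh2
          exact hh2.2 (hIv u huS₁ hh2.1)
      · have huS₂ : u ∈ S₂ := (hUS u).resolve_left huS₁
        have hunv : u ≠ v := fun h => huS₁ (h ▸ hvS₁)
        obtain ⟨e, ⟨heA, hh⟩, huni⟩ := hu₂ u huS₂ hunv
        refine ⟨e, ⟨Or.inr heA, by rw [hdA₂ e heA]; exact hh⟩, ?_⟩
        rintro e' ⟨(he' | he'), hh'⟩
        · exfalso
          have hh1 := hhead₁ e' he'
          rw [hh'] at hh1
          exact huS₁ hh1.1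
        · exact huni e' ⟨he', by rwa [hdA₂ e' he'] at hh'⟩
    · rintro e (he | he)
      · exact ⟨Set.mem_univ _, Set.mem_univ _, (hhead₁ e he).2⟩
      · refine ⟨Set.mem_univ _, Set.mem_univ _, ?_⟩
        intro h
        have hh2 := hhead₂ e he
        rw [h] at hh2
        exact hh2.2 (hIv v₁ hv₁ hh2.1)
    · intro u _
      have lift₁ : ∀ a b, (∃ e ∈ A₁ i, d₁ e = (a, b)) →
          (∃ e ∈ A₁ i ∪ A₂ j, d e = (a, b)) := by
        rintro a b ⟨e, he, hde⟩
        exact ⟨e, Or.inl he, by rw [hdA₁ e he]; exact hde⟩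
      have lift₂ : ∀ a b, (∃ e ∈ A₂ j, d₂ e = (a, b)) →
          (∃ e ∈ A₁ i ∪ A₂ j, d e = (a, b)) := by
        rintro a b ⟨e, he, hde⟩
        exact ⟨e, Or.inr he, by rw [hdA₂ e he]; exact hde⟩
      rcases hUS u with hu | hu
      · exact Relation.ReflTransGen.mono lift₁ _ _ (hr₁ u hu)
      · exact (Relation.ReflTransGen.mono lift₁ _ _ (hr₁ v hvS₁)).trans (Relation.ReflTransGen.mono lift₂ _ _ (hr₂ u hu))
  · intro e _
    simp only [Set.mem_union]
    refine le_trans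
      (le_of_eq (hsum_conv (fun p => if e ∈ A₁ p.1 ∨ e ∈ A₂ p.2 then μ p.1 p.2 else 0))) ?_
    by_cases he : e ∈ E₁
    · have step : ∀ (i : Fin t₁) (j : Fin t₂),
          (if e ∈ A₁ i ∨ e ∈ A₂ j then μ i j else 0) = if e ∈ A₁ i then μ i j else 0 := by
        intro i j
        have : e ∉ A₂ j := fun h => (hA₂ j).1 h he
        by_cases h1 : e ∈ A₁ i <;> simp [h1, this]
      refine le_trans (le_of_eq (Finset.sum_congr rfl fun i _ =>
        Finset.sum_congr rfl fun jj _ => step i jj)) ?_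
      refine le_trans (Finset.sum_le_sum fun i _ => ?_) (hcap₁ e he)
      by_cases h1 : e ∈ A₁ i
      · simp only [if_pos h1]
        simpa [h1] using hμr i
      · simp [h1]
    · have heC : e ∈ E₁ᶜ := he
      have step : ∀ (i : Fin t₁) (j : Fin t₂),
          (if e ∈ A₁ i ∨ e ∈ A₂ j then μ i j else 0) = if e ∈ A₂ j then μ i j else 0 := by
        intro i j
        have : e ∉ A₁ i := fun h => he ((hA₁ i).1 h)
        by_cases h2 : e ∈ A₂ j <;> simp [h2, this]
      refine le_trans (le_of_eq (Finset.sum_congr rfl fun i _ =>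
        Finset.sum_congr rfl fun jj _ => step i jj)) ?_
      rw [Finset.sum_comm]
      refine le_trans (Finset.sum_le_sum fun jj _ => ?_) (hcap₂ e heC)
      by_cases h2 : e ∈ A₂ jj
      · simp only [if_pos h2]
        simpa [h2] using hμc jj
      · simp [h2]
  · exact ((hsum_conv (fun p => μ p.1 p.2)).trans hμt).symm

end OneSum


/-- If `G` is the 1-sum of two (nontrivial) graphs `G₁` (vertices `S₁`,
edges `E₁`) and `G₂` (vertices `S₂`, edges `E₁ᶜ`) glued at the single common vertex `v`,
then for any `v₁ ∈ S₁`, `k(G, w, v₁) = min (k(G₁, w₁, v₁)) (k(G₂, w₂, v))`. -/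
theorem stmt_6 [Fintype V] [Fintype E] (ends : E → Sym2 V) (w : E → ℝ)
    (hw : ∀ e, 0 ≤ w e) (S₁ S₂ : Set V) (E₁ : Set E) (v v₁ : V)
    (hU : S₁ ∪ S₂ = Set.univ) (hI : S₁ ∩ S₂ = {v})
    (hS₁ : ∃ u ∈ S₁, u ≠ v) (hS₂ : ∃ u ∈ S₂, u ≠ v)
    (hE₁ : ∀ e ∈ E₁, ∀ x ∈ ends e, x ∈ S₁)
    (hE₂ : ∀ e ∈ E₁ᶜ, ∀ x ∈ ends e, x ∈ S₂)
    (hv₁ : v₁ ∈ S₁) :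
    kOn ends Set.univ Set.univ w v₁ =
      min (kOn ends E₁ S₁ w v₁) (kOn ends E₁ᶜ S₂ w v) := by
  have hvI : v ∈ S₁ ∩ S₂ := by rw [hI]; rfl
  have hvS₁ : v ∈ S₁ := hvI.1
  rw [kOn_eq_sSup, kOn_eq_sSup, kOn_eq_sSup]
  have hexU : ∃ u ∈ (Set.univ : Set V), u ≠ v₁ := by
    obtain ⟨u, -, hune⟩ := hS₂
    by_cases h : v₁ = v
    · exact ⟨u, Set.mem_univ u, by rw [h]; exact hune⟩
    · exact ⟨v, Set.mem_univ v, fun hh => h hh.symm⟩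
  have hex₁ : ∃ u ∈ S₁, u ≠ v₁ := by
    obtain ⟨u, huS, hune⟩ := hS₁
    by_cases h : v₁ = v
    · exact ⟨u, huS, by rw [h]; exact hune⟩
    · exact ⟨v, hvS₁, fun hh => h hh.symm⟩
  have bddG : BddAbove (KSet ends Set.univ Set.univ w v₁) :=
    ⟨∑ e, w e, fun x hx => KSet_bdd hw hexU hx⟩
  have bdd₁ : BddAbove (KSet ends E₁ S₁ w v₁) :=
    ⟨∑ e, w e, fun x hx => KSet_bdd hw hex₁ hx⟩
  have bdd₂ : BddAbove (KSet ends E₁ᶜ S₂ w v) :=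
    ⟨∑ e, w e, fun x hx => KSet_bdd hw hS₂ hx⟩
  by_cases hK : (KSet ends Set.univ Set.univ w v₁).Nonempty
  · obtain ⟨x0, hx0⟩ := hK
    apply le_antisymm
    · apply csSup_le ⟨x0, hx0⟩
      intro x hx
      exact le_min (le_csSup bdd₁ (restrict₁ hI hv₁ hE₁ hE₂ hx))
        (le_csSup bdd₂ (restrict₂ hI hv₁ hE₁ hE₂ hx))
    · by_contra hlt
      push_neg at hlt
      have h1 : sSup (KSet ends Set.univ Set.univ w v₁) < sSup (KSet ends E₁ S₁ w v₁) :=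
        lt_of_lt_of_le hlt (min_le_left _ _)
      have h2 : sSup (KSet ends Set.univ Set.univ w v₁) < sSup (KSet ends E₁ᶜ S₂ w v) :=
        lt_of_lt_of_le hlt (min_le_right _ _)
      obtain ⟨y₁, hy₁K, hy₁⟩ :=
        exists_lt_of_lt_csSup ⟨x0, restrict₁ hI hv₁ hE₁ hE₂ hx0⟩ h1
      obtain ⟨y₂, hy₂K, hy₂⟩ :=
        exists_lt_of_lt_csSup ⟨x0, restrict₂ hI hv₁ hE₁ hE₂ hx0⟩ h2
      have hmem := combine hU hI hv₁ hE₁ hE₂ hy₁K hy₂K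
      have hle := le_csSup bddG hmem
      have hmin : sSup (KSet ends Set.univ Set.univ w v₁) < min y₁ y₂ := lt_min hy₁ hy₂
      have : (min y₁ y₂ : ℝ) ≤ sSup (KSet ends Set.univ Set.univ w v₁) := hle
      linarith
  · have hKe : KSet ends Set.univ Set.univ w v₁ = ∅ := Set.not_nonempty_iff_eq_empty.1 hK
    rw [hKe, Real.sSup_empty]
    have hs₁nn : 0 ≤ sSup (KSet ends E₁ S₁ w v₁) := by
      rcases Set.eq_empty_or_nonempty (KSet ends E₁ S₁ w v₁) with h | ⟨y, hy⟩
      · rw [h, Real.sSup_empty]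
      · exact le_trans (KSet_nonneg hy) (le_csSup bdd₁ hy)
    have hs₂nn : 0 ≤ sSup (KSet ends E₁ᶜ S₂ w v) := by
      rcases Set.eq_empty_or_nonempty (KSet ends E₁ᶜ S₂ w v) with h | ⟨y, hy⟩
      · rw [h, Real.sSup_empty]
      · exact le_trans (KSet_nonneg hy) (le_csSup bdd₂ hy)
    have hone : KSet ends E₁ S₁ w v₁ = ∅ ∨ KSet ends E₁ᶜ S₂ w v = ∅ := by
      by_contra h
      push_neg at h
      obtain ⟨y₁, hy₁⟩ := h.1
      obtain ⟨y₂, hy₂⟩ := h.2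
      exact hK ⟨_, combine hU hI hv₁ hE₁ hE₂ hy₁ hy₂⟩
    rcases hone with h | h
    · rw [h, Real.sSup_empty]
      exact (min_eq_left hs₂nn).symm
    · rw [h, Real.sSup_empty]
      exact (min_eq_right hs₁nn).symm
end

section
/- Let G be a finite acyclic digraph with root r (unique vertex of indegree 0) and nonnegative edge weights w. Then the maximum value of a weighted packing of spanning r-arborescences in G equals the minimum over vertices v ≠ r of w(δ⁻(v)). -/
open scoped Classical

/-- In a finite acyclic digraph with unique source `r` and nonnegative
weights, the maximum value of a weighted packing of spanning `r`-arborescences equals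
the minimum over vertices `v ≠ r` of the total weight of edges entering `v`. -/
theorem stmt_7 {V : Type*} [Fintype V] (D : V → V → Prop) (r : V) (w : V → V → ℝ)
    (hD : ∀ v, ¬ Relation.TransGen D v v)
    (hroot : (∀ u, ¬ D u r) ∧ ∀ v, (∀ u, ¬ D u v) → v = r)
    (hw : ∀ u v, 0 ≤ w u v) (hV : ∃ v, v ≠ r) :
    IsGreatest {x : ℝ | ∃ (t : ℕ) (lam : Fin t → ℝ) (A : Fin t → V → V → Prop),
        (∀ i, 0 ≤ lam i) ∧
        (∀ i, (∀ u v, A i u v → D u v) ∧ (∀ v, v ≠ r → ∃! u, A i u v) ∧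
          (∀ u, ¬ A i u r) ∧ (∀ v, Relation.ReflTransGen (A i) r v)) ∧
        (∀ u v, D u v → ∑ i, (if A i u v then lam i else 0) ≤ w u v) ∧
        x = ∑ i, lam i}
      (sInf {x : ℝ | ∃ v : V, v ≠ r ∧ x = ∑ u : V, if D u v then w u v else 0}) := by
  classical
  set W : V → ℝ := fun v => ∑ u : V, if D u v then w u v else 0 with hWdef
  have hWnn : ∀ v, 0 ≤ W v := by
    intro v
    refine Finset.sum_nonneg fun u _ => ?_
    split_ifs
    · exact hw u v
    · exact le_refl 0
  have hCeq : {x : ℝ | ∃ v : V, v ≠ r ∧ x = ∑ u : V, if D u v then w u v else 0}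
      = {x : ℝ | ∃ v : V, v ≠ r ∧ x = W v} := rfl
  rw [hCeq]
  set C : Set ℝ := {x : ℝ | ∃ v : V, v ≠ r ∧ x = W v} with hC
  have hCne : C.Nonempty := by
    obtain ⟨v, hv⟩ := hV
    exact ⟨W v, v, hv, rfl⟩
  have hCfin : C.Finite := by
    refine (Set.finite_range W).subset ?_
    rintro x ⟨v, -, rfl⟩
    exact ⟨v, rfl⟩
  set μ := sInf C with hμdef
  have hμmem : μ ∈ C := hCne.csInf_mem hCfin
  have hμle : ∀ v, v ≠ r → μ ≤ W v := fun v hv => csInf_le hCfin.bddBelow ⟨v, hv, rfl⟩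
  have hμnn : 0 ≤ μ := by
    obtain ⟨v₁, hv₁, hμeq⟩ := hμmem
    exact hμeq ▸ hWnn v₁
  constructor
  · -- membership: there is a packing of value μ
    by_cases hμ0 : μ ≤ 0
    · have hμz : μ = 0 := le_antisymm hμ0 hμnn
      refine ⟨0, fun _ => 0, fun i => i.elim0, fun i => i.elim0, fun i => i.elim0,
        fun u v _ => by simpa using hw u v, by simp [hμz]⟩
    · push_neg at hμ0
      have hWpos : ∀ v : V, v ≠ r → 0 < W v := fun v hv => lt_of_lt_of_le hμ0 (hμle v hv)
      set S := {v : V // v ≠ r} with hS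
      let T : S → Type _ := fun v => {u : V // D u v.1}
      let P := ∀ v : S, T v
      let e : Fin (Fintype.card P) ≃ P := (Fintype.equivFin P).symm
      let F : ∀ v : S, T v → ℝ := fun v x => w x.1 v.1 / W v.1
      have hFnn : ∀ (v : S) (x : T v), 0 ≤ F v x :=
        fun v x => div_nonneg (hw _ _) (hWpos v.1 v.2).le
      have hsumW : ∀ v : S, ∑ x : T v, w x.1 v.1 = W v.1 := by
        intro v
        show ∑ x : T v, w x.1 v.1 = ∑ u : V, if D u v.1 then w u v.1 else 0
        rw [← Finset.sum_filter (fun u => D u v.1) (fun u => w u v.1)]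
        exact (Finset.sum_subtype _ (by simp) (fun u => w u v.1)).symm
      have hFsum : ∀ v : S, ∑ x : T v, F v x = 1 := by
        intro v
        rw [← Finset.sum_div, hsumW v, div_self (hWpos v.1 v.2).ne']
      let lamP : P → ℝ := fun p => μ * ∏ v : S, F v (p v)
      let AP : P → V → V → Prop := fun p u v => ∃ h : v ≠ r, ((p ⟨v, h⟩ : T ⟨v, h⟩) : V) = u
      have hlamPnn : ∀ p : P, 0 ≤ lamP p :=
        fun p => mul_nonneg hμnn (Finset.prod_nonneg fun v _ => hFnn v (p v))
      -- total value
      have hlamPsum : ∑ p : P, lamP p = μ := by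
        show ∑ p : P, μ * ∏ v : S, F v (p v) = μ
        rw [← Finset.mul_sum, ← Fintype.prod_sum F]
        simp [hFsum]
      -- reachability
      haveI : IsTrans V (Relation.TransGen D) := ⟨fun _ _ _ => Relation.TransGen.trans⟩
      haveI : IsIrrefl V (Relation.TransGen D) := ⟨hD⟩
      have hwf : WellFounded (Relation.TransGen D) :=
        Finite.wellFounded_of_trans_of_irrefl _
      have hreach : ∀ (p : P) (v : V), Relation.ReflTransGen (AP p) r v := by
        intro p v
        induction v using WellFounded.induction hwf with
        | _ v ih =>
          by_cases hv : v = r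
          · exact hv ▸ Relation.ReflTransGen.refl
          · exact Relation.ReflTransGen.tail
              (ih (p ⟨v, hv⟩).1 (Relation.TransGen.single (p ⟨v, hv⟩).2)) ⟨hv, rfl⟩
      refine ⟨Fintype.card P, fun i => lamP (e i), fun i => AP (e i),
        fun i => hlamPnn (e i), ?_, ?_, ?_⟩
      · intro i
        refine ⟨?_, ?_, ?_, hreach (e i)⟩
        · rintro u v ⟨h, rfl⟩
          exact ((e i) ⟨v, h⟩).2
        · intro v hv
          refine ⟨((e i) ⟨v, hv⟩ : T ⟨v, hv⟩), ⟨hv, rfl⟩, ?_⟩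
          rintro u ⟨h, rfl⟩
          rfl
        · rintro u ⟨h, -⟩
          exact h rfl
      · -- edge constraints
        intro u₀ v₀ hd
        have key : (∑ i : Fin (Fintype.card P), if AP (e i) u₀ v₀ then lamP (e i) else 0)
            ≤ w u₀ v₀ := by
          have step : (∑ i : Fin (Fintype.card P), if AP (e i) u₀ v₀ then lamP (e i) else 0)
              = ∑ p : P, (if AP p u₀ v₀ then lamP p else 0) :=
            Fintype.sum_equiv e _ _ (fun i => rfl)
          refine le_of_eq_of_le step ?_
          by_cases h₀ : v₀ = r
          · subst h₀
            have : ∀ p : P, (if AP p u₀ v₀ then lamP p else 0) = 0 := by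
              intro p
              rw [if_neg]
              rintro ⟨h, -⟩
              exact h rfl
            rw [Finset.sum_congr rfl fun p _ => this p, Finset.sum_const, smul_zero]
            exact hw u₀ v₀
          · set s₀ : S := ⟨v₀, h₀⟩ with hs₀
            let F' : ∀ v : S, T v → ℝ := fun v x =>
              if v = s₀ then (if (x : V) = u₀ then F v x else 0) else F v x
            have hAiff : ∀ p : P, (if AP p u₀ v₀ then lamP p else 0)
                = μ * ∏ v : S, F' v (p v) := by
              intro p
              by_cases hp : ((p s₀ : T s₀) : V) = u₀
              · rw [if_pos ⟨h₀, hp⟩]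
                show μ * ∏ v : S, F v (p v) = μ * ∏ v : S, F' v (p v)
                congr 1
                refine Finset.prod_congr rfl fun v _ => ?_
                by_cases hv : v = s₀
                · subst hv
                  show F s₀ (p s₀) = if s₀ = s₀ then
                    (if ((p s₀ : T s₀) : V) = u₀ then F s₀ (p s₀) else 0) else F s₀ (p s₀)
                  rw [if_pos rfl, if_pos hp]
                · show F v (p v) = if v = s₀ then _ else F v (p v)
                  rw [if_neg hv]
              · rw [if_neg]
                · symm
                  refine mul_eq_zero_of_right μ (Finset.prod_eq_zero (Finset.mem_univ s₀) ?_)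
                  show (if s₀ = s₀ then (if ((p s₀ : T s₀) : V) = u₀ then F s₀ (p s₀) else 0)
                    else F s₀ (p s₀)) = 0
                  rw [if_pos rfl, if_neg hp]
                · rintro ⟨h, he⟩
                  exact hp he
            have hF'sum : ∀ v : S, ∑ x : T v, F' v x
                = if v = s₀ then F s₀ ⟨u₀, hd⟩ else 1 := by
              intro v
              by_cases hv : v = s₀
              · subst hv
                rw [if_pos rfl]
                have : ∀ x : T s₀, F' s₀ x = if (x : V) = u₀ then F s₀ x else 0 := by
                  intro x
                  show (if s₀ = s₀ then _ else _) = _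
                  rw [if_pos rfl]
                rw [Finset.sum_congr rfl fun x _ => this x]
                rw [Finset.sum_eq_single (⟨u₀, hd⟩ : T s₀)]
                · rw [if_pos rfl]
                · intro b _ hb
                  refine if_neg fun hbe => hb (Subtype.ext hbe)
                · intro h
                  exact absurd (Finset.mem_univ _) h
              · rw [if_neg hv]
                have : ∀ x : T v, F' v x = F v x := by
                  intro x
                  show (if v = s₀ then _ else F v x) = F v x
                  rw [if_neg hv]
                rw [Finset.sum_congr rfl fun x _ => this x, hFsum v]
            calc ∑ p : P, (if AP p u₀ v₀ then lamP p else 0)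
                = ∑ p : P, μ * ∏ v : S, F' v (p v) :=
                  Finset.sum_congr rfl fun p _ => hAiff p
              _ = μ * ∑ p : P, ∏ v : S, F' v (p v) := by rw [Finset.mul_sum]
              _ = μ * ∏ v : S, ∑ x : T v, F' v x := by rw [← Fintype.prod_sum F']
              _ = μ * F s₀ ⟨u₀, hd⟩ := by
                  congr 1
                  rw [Finset.prod_congr rfl fun v _ => hF'sum v]
                  rw [Finset.prod_ite_eq' Finset.univ s₀ (fun _ => F s₀ ⟨u₀, hd⟩)]
                  · rw [if_pos (Finset.mem_univ s₀)]
              _ ≤ w u₀ v₀ := by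
                  show μ * (w u₀ v₀ / W v₀) ≤ w u₀ v₀
                  calc μ * (w u₀ v₀ / W v₀) = (μ / W v₀) * w u₀ v₀ := by ring
                    _ ≤ 1 * w u₀ v₀ := by
                        refine mul_le_mul_of_nonneg_right ?_ (hw u₀ v₀)
                        exact (div_le_one (hWpos v₀ h₀)).mpr (hμle v₀ h₀)
                    _ = w u₀ v₀ := one_mul _
        convert key using 2
        exact ite_congr rfl (fun _ => rfl) (fun _ => rfl)
      · exact (Equiv.sum_comp e lamP ▸ hlamPsum).symm
  · -- upper bound
    rintro x ⟨t, lam, A, hlamnn, hA, hcon, rfl⟩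
    refine le_csInf hCne ?_
    rintro y ⟨v, hv, rfl⟩
    have hsingle : ∀ i, (∑ u : V, if A i u v then lam i else 0) = lam i := by
      intro i
      obtain ⟨u₀, hu₀, huniq⟩ := (hA i).2.1 v hv
      rw [Finset.sum_eq_single u₀]
      · exact if_pos hu₀
      · intro b _ hb
        exact if_neg fun hAb => hb (huniq b hAb)
      · intro h
        exact absurd (Finset.mem_univ u₀) h
    calc ∑ i, lam i = ∑ i, ∑ u : V, (if A i u v then lam i else 0) := by
          exact Finset.sum_congr rfl fun i _ => (hsingle i).symm
      _ = ∑ u : V, ∑ i, (if A i u v then lam i else 0) := Finset.sum_comm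
      _ ≤ ∑ u : V, (if D u v then w u v else 0) := by
          refine Finset.sum_le_sum fun u _ => ?_
          by_cases hd : D u v
          · rw [if_pos hd]
            exact hcon u v hd
          · rw [if_neg hd]
            exact le_of_eq (Finset.sum_eq_zero fun i _ => if_neg fun hAi => hd ((hA i).1 u v hAi))
      _ = W v := rfl
end

section
/- Let C_n (n ≥ 3) be a cycle with nonnegative edge weights w, and let e₁, e₂ be edges with the smallest and second-smallest weights. If e₁ and e₂ share a vertex s, then k(C_n, w) = min{ w(e₁) + w(e₂), w(e₃) }, where e₃ is a third-smallest-weight edge; the optimum is achieved by orienting all edges toward s from any root r ≠ s. -/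
open scoped Classical

variable {V E : Type*}

/-- The cycle `C_n`: vertex `i` is joined to `i + 1` (mod `n`) by edge `i`. -/
def cycEnds (n : ℕ) [NeZero n] : Fin n → Sym2 (Fin n) := fun i => s(i, i + 1)

namespace Stmt9
set_option linter.unusedSectionVars false

variable {n : ℕ} [NeZero n]

def pos (r v : Fin n) : ℕ := (v - r).val

lemma pos_lt (r v : Fin n) : pos r v < n := (v - r).isLt

lemma pos_self (r : Fin n) : pos r r = 0 := by simp [pos]

lemma pos_inj {r v u : Fin n} (h : pos r v = pos r u) : v = u :=
  sub_left_injective (Fin.val_injective h)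

lemma pos_eq_zero {r v : Fin n} (h : pos r v = 0) : v = r := by
  have h0 : v - r = 0 := by
    apply Fin.val_injective
    simpa [pos] using h
  exact sub_eq_zero.mp h0

lemma pos_succ (hn : 3 ≤ n) (r v : Fin n) :
    (pos r v + 1 < n ∧ pos r (v + 1) = pos r v + 1) ∨ (pos r v = n - 1 ∧ v + 1 = r) := by
  have key : v + 1 - r = (v - r) + 1 := by abel
  have hval : pos r (v + 1) = ((v - r).val + 1) % n := by
    show (v + 1 - r).val = _
    rw [key, Fin.add_def, Fin.val_one']
    rw [Nat.mod_eq_of_lt (show 1 < n by omega)]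
  have hlt := pos_lt r v
  by_cases h : pos r v + 1 < n
  · exact Or.inl ⟨h, by rw [hval]; exact Nat.mod_eq_of_lt h⟩
  · have hp : pos r v = n - 1 := by omega
    have h0 : pos r (v + 1) = 0 := by
      rw [hval]
      have h2 : (v - r).val + 1 = n := by unfold pos at hp; omega
      rw [h2, Nat.mod_self]
    exact Or.inr ⟨hp, pos_eq_zero h0⟩

lemma pos_pred (hn : 3 ≤ n) {r v : Fin n} (h : v ≠ r) : pos r (v - 1) + 1 = pos r v := by
  have hv : (v - 1) + 1 = v := by abel
  rcases pos_succ hn r (v - 1) with ⟨-, h2⟩ | ⟨-, h2⟩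
  · rw [hv] at h2; omega
  · rw [hv] at h2; exact absurd h2 h

lemma succ_ne (hn : 3 ≤ n) (e : Fin n) : e + 1 ≠ e := by
  intro h
  rcases pos_succ hn e e with ⟨-, h2⟩ | ⟨h1, -⟩
  · rw [h] at h2; simp [pos_self] at h2
  · rw [pos_self] at h1; omega

lemma sub_one_ne (hn : 3 ≤ n) (v : Fin n) : v - 1 ≠ v := by
  intro h
  have h1 : (v - 1) + 1 = v := by abel
  rw [h] at h1
  exact succ_ne hn v h1

lemma eq_sub_one_of_succ {a v : Fin n} (h : a + 1 = v) : a = v - 1 := by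
  rw [← h]; abel

lemma nondiag (hn : 3 ≤ n) (e : Fin n) : ¬ (cycEnds n e).IsDiag := by
  simp only [cycEnds, Sym2.mk_isDiag_iff]
  exact fun h => succ_ne hn e h.symm

lemma dir_cases (hn : 3 ≤ n) {d : Fin n → Fin n × Fin n}
    (hOr : IsOrientation (cycEnds n) Set.univ d) (e : Fin n) :
    d e = (e, e + 1) ∨ d e = (e + 1, e) := by
  have h := hOr e (Set.mem_univ e) (nondiag hn e)
  rw [show cycEnds n e = s(e, e + 1) from rfl, Sym2.eq_iff] at h
  rcases h with ⟨h1, h2⟩ | ⟨h1, h2⟩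
  · left; rw [show d e = ((d e).1, (d e).2) from rfl, ← h1, ← h2]
  · right; rw [show d e = ((d e).1, (d e).2) from rfl, ← h1, ← h2]

/-- The feasible-value set of `kOn` for the cycle. -/
def PSet (hn : 3 ≤ n) (w : Fin n → ℝ) (r : Fin n) : Set ℝ :=
  {x : ℝ | ∃ d : Fin n → Fin n × Fin n, IsOrientation (cycEnds n) Set.univ d ∧
    AcyclicOn (cycEnds n) Set.univ d ∧
    RootedAt (cycEnds n) Set.univ Set.univ d r ∧
    ∃ (t : ℕ) (lam : Fin t → ℝ) (A : Fin t → Set (Fin n)),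
      (∀ i, 0 ≤ lam i) ∧ (∀ i, IsArbM (cycEnds n) Set.univ Set.univ d r (A i)) ∧
      (∀ e ∈ (Set.univ : Set (Fin n)), ∑ i, (if e ∈ A i then lam i else 0) ≤ w e) ∧
      x = ∑ i, lam i}

lemma upper (hn : 3 ≤ n) (w : Fin n → ℝ) (hw : ∀ e, 0 ≤ w e)
    (e₁ e₂ e₃ : Fin n) (h12 : e₁ ≠ e₂) (h13 : e₁ ≠ e₃) (h23 : e₂ ≠ e₃)
    (hw12 : w e₁ ≤ w e₂) (hw23 : w e₂ ≤ w e₃)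
    (hmin : ∀ e, e ≠ e₁ → e ≠ e₂ → e ≠ e₃ → w e₃ ≤ w e)
    (r : Fin n) (x : ℝ) (hx : x ∈ PSet hn w r) :
    x ≤ min (w e₁ + w e₂) (w e₃) := by
  obtain ⟨d, hOr, -, hRoot, t, lam, A, hlam, hArb, hcap, hxeq⟩ := hx
  have hdir := fun e => dir_cases hn hOr e
  -- cheapness facts
  have hch1 : ∀ f, w e₁ ≤ w f := by
    intro f
    by_cases hf1 : f = e₁; · rw [hf1]
    by_cases hf2 : f = e₂; · rw [hf2]; exact hw12
    by_cases hf3 : f = e₃; · rw [hf3]; exact hw12.trans hw23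
    exact (hw12.trans hw23).trans (hmin f hf1 hf2 hf3)
  have hch2 : ∀ f, f ≠ e₁ → w e₂ ≤ w f := by
    intro f hf1
    by_cases hf2 : f = e₂; · rw [hf2]
    by_cases hf3 : f = e₃; · rw [hf3]; exact hw23
    exact hw23.trans (hmin f hf1 hf2 hf3)
  have hch3 : ∀ f, f ≠ e₁ → f ≠ e₂ → w e₃ ≤ w f := by
    intro f hf1 hf2
    by_cases hf3 : f = e₃; · rw [hf3]
    exact hmin f hf1 hf2 hf3
  -- fibers of the head map
  classical
  set fib : Fin n → Finset (Fin n) :=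
    fun v => Finset.univ.filter (fun e => (d e).2 = v) with hfibdef
  have hmem_fib : ∀ v e, e ∈ fib v ↔ (d e).2 = v := by
    intro v e; simp [hfibdef]
  have hfib_sub : ∀ v, fib v ⊆ {v - 1, v} := by
    intro v e he
    rw [hmem_fib] at he
    rcases hdir e with h | h <;> rw [h] at he
    · simp only [Finset.mem_insert, Finset.mem_singleton]
      exact Or.inl (eq_sub_one_of_succ he)
    · simp only [Finset.mem_insert, Finset.mem_singleton]
      exact Or.inr he
  have hfib_r : fib r = ∅ := by
    rw [Finset.eq_empty_iff_forall_notMem]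
    intro e he
    rw [hmem_fib] at he
    exact hRoot.2.1 (d e).1 ⟨e, Set.mem_univ e, nondiag hn e, by rw [← he]⟩
  have hfib_ne : ∀ v, v ≠ r → (fib v).Nonempty := by
    intro v hv
    by_contra hcon
    rw [Finset.not_nonempty_iff_eq_empty] at hcon
    refine hv (hRoot.2.2 v (Set.mem_univ v) ?_)
    rintro u ⟨e, -, -, he⟩
    have : e ∈ fib v := by rw [hmem_fib, he]
    rw [hcon] at this; exact absurd this (Finset.notMem_empty e)
  have hsum : ∑ v, (fib v).card = n := by
    have := Finset.card_eq_sum_card_fiberwise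
      (f := fun e => (d e).2) (s := Finset.univ) (t := Finset.univ)
      (fun e _ => Finset.mem_univ _)
    rw [Finset.card_univ, Fintype.card_fin] at this
    exact this.symm
  -- there is a sink
  have hsink : ∃ s, 2 ≤ (fib s).card := by
    by_contra hcon
    push_neg at hcon
    have h1 : (fib r).card + ∑ v ∈ Finset.univ.erase r, (fib v).card = ∑ v, (fib v).card :=
      Finset.add_sum_erase Finset.univ (fun v => (fib v).card) (Finset.mem_univ r)
    have h2 : ∑ v ∈ Finset.univ.erase r, (fib v).card ≤ (Finset.univ.erase r).card := by
      simpa using Finset.sum_le_card_nsmul (Finset.univ.erase r) (fun v => (fib v).card) 1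
        (fun v _ => Nat.lt_succ_iff.mp (hcon v))
    have h3 : (Finset.univ.erase r).card = n - 1 := by
      rw [Finset.card_erase_of_mem (Finset.mem_univ r), Finset.card_univ, Fintype.card_fin]
    have h4 : (fib r).card = 0 := by rw [hfib_r]; rfl
    omega
  obtain ⟨s, hs2⟩ := hsink
  have hsr : s ≠ r := by
    intro h; rw [h, hfib_r] at hs2; simp at hs2
  -- every other non-root vertex has a unique incoming edge
  have hone : ∀ v, v ≠ r → v ≠ s → (fib v).card = 1 := by
    intro v hvr hvs
    have hge : 1 ≤ (fib v).card := Finset.card_pos.mpr (hfib_ne v hvr)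
    by_contra hcon
    have hge2 : 2 ≤ (fib v).card := by omega
    have hvmem : v ∈ Finset.univ.erase s := Finset.mem_erase.mpr ⟨hvs, Finset.mem_univ v⟩
    have hrmem : r ∈ (Finset.univ.erase s).erase v :=
      Finset.mem_erase.mpr ⟨Ne.symm hvr, Finset.mem_erase.mpr ⟨Ne.symm hsr, Finset.mem_univ r⟩⟩
    have h1 : (fib s).card + ∑ u ∈ Finset.univ.erase s, (fib u).card = ∑ u, (fib u).card :=
      Finset.add_sum_erase _ (fun u => (fib u).card) (Finset.mem_univ s)
    have h2 : (fib v).card + ∑ u ∈ (Finset.univ.erase s).erase v, (fib u).card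
        = ∑ u ∈ Finset.univ.erase s, (fib u).card :=
      Finset.add_sum_erase _ (fun u => (fib u).card) hvmem
    have h4 : (((Finset.univ.erase s).erase v).erase r).card ≤
        ∑ u ∈ ((Finset.univ.erase s).erase v).erase r, (fib u).card := by
      simpa using Finset.card_nsmul_le_sum (((Finset.univ.erase s).erase v).erase r)
        (fun u => (fib u).card) 1
        (fun u hu => Finset.card_pos.mpr (hfib_ne u (Finset.mem_erase.mp hu).1))
    have h5 : ∑ u ∈ ((Finset.univ.erase s).erase v).erase r, (fib u).card ≤
        ∑ u ∈ (Finset.univ.erase s).erase v, (fib u).card :=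
      Finset.sum_le_sum_of_subset (Finset.erase_subset r _)
    have hcard : (((Finset.univ.erase s).erase v).erase r).card = n - 3 := by
      rw [Finset.card_erase_of_mem hrmem, Finset.card_erase_of_mem hvmem,
        Finset.card_erase_of_mem (Finset.mem_univ s), Finset.card_univ, Fintype.card_fin]
      omega
    omega
  -- no edge enters the root
  have hhead_ne_r : ∀ e, (d e).2 ≠ r := by
    intro e h
    have : e ∈ fib r := by rw [hmem_fib]; exact h
    rw [hfib_r] at this; exact absurd this (Finset.notMem_empty e)
  -- if an edge is the unique one entering its head, every arborescence uses it
  have bound_single : ∀ g : Fin n, (d g).2 ≠ s → x ≤ w g := by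
    intro g hgs
    have hcard1 : (fib ((d g).2)).card = 1 := hone _ (hhead_ne_r g) hgs
    obtain ⟨g', hg'⟩ := Finset.card_eq_one.mp hcard1
    have hgg' : g = g' := by
      have : g ∈ fib ((d g).2) := by rw [hmem_fib]
      rw [hg'] at this; exact Finset.mem_singleton.mp this
    have hall : ∀ i, g ∈ A i := by
      intro i
      obtain ⟨e, ⟨heA, hehead⟩, -⟩ := (hArb i).2.2.1 ((d g).2) (Set.mem_univ _) (hhead_ne_r g)
      have : e ∈ fib ((d g).2) := by rw [hmem_fib]; exact hehead
      rw [hg'] at this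
      have he : e = g' := Finset.mem_singleton.mp this
      rw [hgg', ← he]; exact heA
    rw [hxeq]
    calc ∑ i, lam i = ∑ i, (if g ∈ A i then lam i else 0) := by
          exact Finset.sum_congr rfl (fun i _ => (if_pos (hall i)).symm)
      _ ≤ w g := hcap g (Set.mem_univ g)
  -- bound B : x ≤ w e₃
  have hB : x ≤ w e₃ := by
    by_cases h1 : (d e₁).2 = s
    · by_cases h2 : (d e₂).2 = s
      · by_cases h3 : (d e₃).2 = s
        · exfalso
          have m1 := hfib_sub s ((hmem_fib s e₁).mpr h1)
          have m2 := hfib_sub s ((hmem_fib s e₂).mpr h2)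
          have m3 := hfib_sub s ((hmem_fib s e₃).mpr h3)
          simp only [Finset.mem_insert, Finset.mem_singleton] at m1 m2 m3
          rcases m1 with m1 | m1 <;> rcases m2 with m2 | m2 <;> rcases m3 with m3 | m3 <;>
            simp_all
        · exact (bound_single e₃ h3)
      · exact (bound_single e₂ h2).trans hw23
    · exact (bound_single e₁ h1).trans (hw12.trans hw23)
  -- bound A : x ≤ w e₁ + w e₂
  have hA : x ≤ w e₁ + w e₂ := by
    have hperi : ∀ i, lam i ≤
        (if s - 1 ∈ A i then lam i else 0) + (if s ∈ A i then lam i else 0) := by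
      intro i
      obtain ⟨e, ⟨heA, hehead⟩, -⟩ := (hArb i).2.2.1 s (Set.mem_univ _) hsr
      have hmem2 := hfib_sub s ((hmem_fib s e).mpr hehead)
      simp only [Finset.mem_insert, Finset.mem_singleton] at hmem2
      have h0 : (0:ℝ) ≤ if s ∈ A i then lam i else 0 := by
        by_cases hq : s ∈ A i <;> simp [hq, hlam i]
      have h1 : (0:ℝ) ≤ if s - 1 ∈ A i then lam i else 0 := by
        by_cases hq : s - 1 ∈ A i <;> simp [hq, hlam i]
      rcases hmem2 with h | h <;> subst h
      · rw [if_pos heA]; linarith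
      · rw [if_pos heA]; linarith
    have hsum2 : x ≤ w (s - 1) + w s := by
      rw [hxeq]
      calc ∑ i, lam i
          ≤ ∑ i, ((if s - 1 ∈ A i then lam i else 0) + (if s ∈ A i then lam i else 0)) :=
            Finset.sum_le_sum (fun i _ => hperi i)
        _ = (∑ i, if s - 1 ∈ A i then lam i else 0) + (∑ i, if s ∈ A i then lam i else 0) :=
            Finset.sum_add_distrib
        _ ≤ w (s - 1) + w s :=
            add_le_add (hcap (s - 1) (Set.mem_univ _)) (hcap s (Set.mem_univ _))
    have hhead : ∀ f : Fin n, f ≠ s - 1 → f ≠ s → (d f).2 ≠ s := by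
      intro f hf1 hf2 h
      have hm := hfib_sub s ((hmem_fib s f).mpr h)
      simp only [Finset.mem_insert, Finset.mem_singleton] at hm
      tauto
    by_cases h1a : e₁ = s - 1
    · by_cases h2a : e₂ = s
      · rw [h1a, h2a]; exact hsum2
      · have hne : e₂ ≠ s - 1 := fun h => h12 (h1a.trans h.symm)
        have hx2 := bound_single e₂ (hhead e₂ hne h2a)
        linarith [hw e₁]
    · by_cases h1b : e₁ = s
      · by_cases h2a : e₂ = s - 1
        · rw [h1b, h2a]; linarith [hsum2]
        · have hne : e₂ ≠ s := fun h => h12 (h1b.trans h.symm)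
          have hx2 := bound_single e₂ (hhead e₂ h2a hne)
          linarith [hw e₁]
      · have hx1 := bound_single e₁ (hhead e₁ h1a h1b)
        linarith [hw e₂]
  exact le_min hA hB


/-- Orientation of the cycle with all edges directed towards `c`, away from `r`. -/
def dOr (r c : Fin n) : Fin n → Fin n × Fin n :=
  fun e => if pos r e < pos r c then (e, e + 1) else (e + 1, e)

lemma hm_pos {r c : Fin n} (hrc : r ≠ c) : 0 < pos r c :=
  Nat.pos_of_ne_zero (fun h => hrc (pos_eq_zero h).symm)

lemma dOr_head_r (hn : 3 ≤ n) {r c : Fin n} (hrc : r ≠ c) (e : Fin n) :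
    (dOr r c e).2 ≠ r := by
  intro h
  unfold dOr at h
  split at h
  · rename_i hlt
    simp only at h
    rcases pos_succ hn r e with ⟨-, hp⟩ | ⟨hp, -⟩
    · rw [h, pos_self] at hp; omega
    · have := pos_lt r c; omega
  · rename_i hge
    simp only at h
    rw [h, pos_self] at hge
    exact hge (hm_pos hrc)

lemma dOr_head_c_iff (hn : 3 ≤ n) {r c : Fin n} (hrc : r ≠ c) (e : Fin n) :
    (dOr r c e).2 = c ↔ e = c - 1 ∨ e = c := by
  have hpred : pos r (c - 1) + 1 = pos r c := pos_pred hn (Ne.symm hrc)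
  constructor
  · intro h
    unfold dOr at h
    split at h
    · exact Or.inl (eq_sub_one_of_succ h)
    · exact Or.inr h
  · rintro (h | h) <;> subst h
    · unfold dOr
      rw [if_pos (by omega)]
      show (c - 1) + 1 = c
      abel
    · unfold dOr
      rw [if_neg (by omega)]
lemma dOr_unique_head (hn : 3 ≤ n) {r c : Fin n} (hrc : r ≠ c) {v : Fin n}
    (hvr : v ≠ r) (hvc : v ≠ c) :
    ∃ g, (dOr r c g).2 = v ∧ ∀ e, (dOr r c e).2 = v → e = g := by
  have hp0 : pos r v ≠ 0 := fun h => hvr (pos_eq_zero h)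
  have hpm : pos r v ≠ pos r c := fun h => hvc (pos_inj h)
  have hpred : pos r (v - 1) + 1 = pos r v := pos_pred hn hvr
  by_cases hlt : pos r v < pos r c
  · refine ⟨v - 1, ?_, ?_⟩
    · unfold dOr
      rw [if_pos (by omega)]
      show (v - 1) + 1 = v
      abel
    · intro e he
      unfold dOr at he
      split at he
      · exact eq_sub_one_of_succ he
      · rename_i hge
        have he' : e = v := he
        subst he'
        omega
  · refine ⟨v, ?_, ?_⟩
    · unfold dOr
      rw [if_neg hlt]
    · intro e he
      unfold dOr at he
      split at he
      · rename_i hl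
        have he' : e + 1 = v := he
        have h2 : e = v - 1 := eq_sub_one_of_succ he'
        subst h2
        omega
      · exact he

lemma dOr_isOr (hn : 3 ≤ n) (r c : Fin n) :
    IsOrientation (cycEnds n) Set.univ (dOr r c) := by
  intro e _ _
  unfold dOr
  split
  · rfl
  · exact Sym2.eq_swap

lemma dOr_rooted (hn : 3 ≤ n) {r c : Fin n} (hrc : r ≠ c) :
    RootedAt (cycEnds n) Set.univ Set.univ (dOr r c) r := by
  refine ⟨Set.mem_univ r, ?_, ?_⟩
  · rintro u ⟨e, -, -, he⟩
    exact dOr_head_r hn hrc e (by rw [he])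
  · intro v _ hno
    by_contra hvr
    have hex : ∃ g, (dOr r c g).2 = v := by
      by_cases hvc : v = c
      · exact ⟨c, by rw [hvc]; exact (dOr_head_c_iff hn hrc c).mpr (Or.inr rfl)⟩
      · obtain ⟨g, hg, -⟩ := dOr_unique_head hn hrc hvr hvc
        exact ⟨g, hg⟩
    obtain ⟨g, hg⟩ := hex
    exact hno (dOr r c g).1 ⟨g, Set.mem_univ g, nondiag hn g, by rw [← hg]⟩

/-- Potential function showing acyclicity. -/
def phi (r c v : Fin n) : ℕ :=
  if v = c then n else if pos r v < pos r c then pos r v else n + pos r c - pos r v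

lemma dOr_mono (hn : 3 ≤ n) {r c : Fin n} (hrc : r ≠ c) {u v : Fin n}
    (h : arcRel (cycEnds n) Set.univ (dOr r c) u v) : phi r c u < phi r c v := by
  obtain ⟨e, -, -, he⟩ := h
  have hm0 := hm_pos hrc
  have hmlt := pos_lt r c
  have helt := pos_lt r e
  unfold dOr at he
  split at he
  · rename_i hlt
    injection he with hu hv
    subst hu; subst hv
    have hene : e ≠ c := fun hec => by rw [hec] at hlt; omega
    have hphiu : phi r c e = pos r e := by
      unfold phi; rw [if_neg hene, if_pos hlt]
    by_cases hvc : e + 1 = c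
    · rw [hphiu]
      unfold phi; rw [if_pos hvc]
      omega
    · rcases pos_succ hn r e with ⟨-, hp⟩ | ⟨hp, -⟩
      · have hne : pos r (e + 1) ≠ pos r c := fun hh => hvc (pos_inj hh)
        have hlt2 : pos r (e + 1) < pos r c := by omega
        rw [hphiu]
        unfold phi; rw [if_neg hvc, if_pos hlt2]
        omega
      · omega
  · rename_i hge
    injection he with hu hv
    subst hu; subst hv
    by_cases hec : e = c
    · have h1 : c + 1 ≠ c := succ_ne hn c
      have h2 : pos r (c + 1) ≠ pos r c := fun hh => h1 (pos_inj hh)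
      have h3 := pos_lt r (c + 1)
      rw [hec]
      unfold phi
      rw [if_pos rfl, if_neg h1]
      split <;> omega
    · have hgt : pos r c < pos r e := by
        rcases Nat.lt_or_ge (pos r c) (pos r e) with h | h
        · exact h
        · exfalso
          have : pos r e = pos r c := by omega
          exact hec (pos_inj this)
      have hphiv : phi r c e = n + pos r c - pos r e := by
        unfold phi; rw [if_neg hec, if_neg hge]
      by_cases h1 : e + 1 = r
      · have hrc' : r ≠ c := hrc
        have : phi r c r = pos r r := by
          unfold phi; rw [if_neg hrc]
          rw [if_pos (by rw [pos_self]; omega)]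
        rw [h1, this, pos_self, hphiv]
        omega
      · rcases pos_succ hn r e with ⟨-, hp⟩ | ⟨-, hp⟩
        · have hne : e + 1 ≠ c := by
            intro hh
            have : pos r (e + 1) = pos r c := by rw [hh]
            omega
          have hphiu : phi r c (e + 1) = n + pos r c - pos r (e + 1) := by
            unfold phi; rw [if_neg hne, if_neg (by omega)]
          rw [hphiu, hphiv]
          omega
        · exact absurd hp h1

lemma dOr_acyclic (hn : 3 ≤ n) {r c : Fin n} (hrc : r ≠ c) :
    AcyclicOn (cycEnds n) Set.univ (dOr r c) := by
  intro v hv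
  have key : ∀ a b, Relation.TransGen (arcRel (cycEnds n) Set.univ (dOr r c)) a b →
      phi r c a < phi r c b := by
    intro a b h
    induction h with
    | single h => exact dOr_mono hn hrc h
    | tail h1 h2 ih => exact ih.trans (dOr_mono hn hrc h2)
  exact lt_irrefl _ (key v v hv)

lemma reachF (hn : 3 ≤ n) {r c : Fin n} (hrc : r ≠ c) (A : Set (Fin n)) (mf : ℕ)
    (hmf : mf ≤ pos r c) (hA : ∀ e, pos r e < mf → e ∈ A) :
    ∀ k v, pos r v = k → pos r v ≤ mf →
      Relation.ReflTransGen (fun a b => ∃ e ∈ A, dOr r c e = (a, b)) r v := by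
  intro k
  induction k with
  | zero =>
    intro v hk _
    have := pos_eq_zero hk
    subst this
    exact Relation.ReflTransGen.refl
  | succ k ih =>
    intro v hk hle
    have hvr : v ≠ r := by
      intro h; rw [h, pos_self] at hk; omega
    have hp := pos_pred hn hvr
    have h2 := ih (v - 1) (by omega) (by omega)
    refine h2.tail ⟨v - 1, hA _ (by omega), ?_⟩
    unfold dOr
    rw [if_pos (by omega)]
    rw [show (v - 1) + 1 = v by abel]

lemma reachB (hn : 3 ≤ n) {r c : Fin n} (hrc : r ≠ c) (A : Set (Fin n)) (mb : ℕ)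
    (hmb : pos r c ≤ mb) (hA : ∀ e, mb ≤ pos r e → e ∈ A) :
    ∀ j v, pos r v + j = n - 1 → mb ≤ pos r v →
      Relation.ReflTransGen (fun a b => ∃ e ∈ A, dOr r c e = (a, b)) r v := by
  intro j
  induction j with
  | zero =>
    intro v hk hge
    refine Relation.ReflTransGen.single ⟨v, hA v hge, ?_⟩
    unfold dOr
    rw [if_neg (by omega)]
    rcases pos_succ hn r v with ⟨h1, -⟩ | ⟨-, h2⟩
    · omega
    · rw [h2]
  | succ j ih =>
    intro v hk hge
    have hvlt := pos_lt r v
    rcases pos_succ hn r v with ⟨-, h2⟩ | ⟨h2, -⟩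
    · have hreach := ih (v + 1) (by omega) (by omega)
      refine hreach.tail ⟨v, hA v hge, ?_⟩
      unfold dOr
      rw [if_neg (by omega)]
    · omega

lemma isArb (hn : 3 ≤ n) {r c : Fin n} (hrc : r ≠ c) (g : Fin n) (hg : g = c - 1 ∨ g = c) :
    IsArbM (cycEnds n) Set.univ Set.univ (dOr r c) r {e | e ≠ g} := by
  have hpred : pos r (c - 1) + 1 = pos r c := pos_pred hn (Ne.symm hrc)
  have hm0 := hm_pos hrc
  have hmlt := pos_lt r c
  have hheadg : (dOr r c g).2 = c := (dOr_head_c_iff hn hrc g).mpr hg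
  refine ⟨fun e _ => Set.mem_univ e, fun e _ => nondiag hn e, ?_, ?_, ?_⟩
  · intro v _ hvr
    by_cases hvc : v = c
    · rw [hvc]
      rcases hg with hg1 | hg1
      · refine ⟨c, ⟨?_, (dOr_head_c_iff hn hrc c).mpr (Or.inr rfl)⟩, ?_⟩
        · rw [hg1]; exact (Ne.symm (sub_one_ne hn c))
        · rintro y ⟨hy1, hy2⟩
          rcases (dOr_head_c_iff hn hrc y).mp hy2 with h | h
          · exact absurd (h.trans hg1.symm) hy1
          · exact h
      · refine ⟨c - 1, ⟨?_, (dOr_head_c_iff hn hrc (c - 1)).mpr (Or.inl rfl)⟩, ?_⟩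
        · rw [hg1]; exact sub_one_ne hn c
        · rintro y ⟨hy1, hy2⟩
          rcases (dOr_head_c_iff hn hrc y).mp hy2 with h | h
          · exact h
          · exact absurd (h.trans hg1.symm) hy1
    · obtain ⟨gv, hgv1, hgv2⟩ := dOr_unique_head hn hrc hvr hvc
      have hgvg : gv ≠ g := by
        intro h
        rw [h, hheadg] at hgv1
        exact hvc hgv1.symm
      exact ⟨gv, ⟨hgvg, hgv1⟩, fun y hy => hgv2 y hy.2⟩
  · intro e _
    exact ⟨Set.mem_univ _, Set.mem_univ _, dOr_head_r hn hrc e⟩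
  · intro v _
    rcases hg with hg1 | hg1
    all_goals rw [hg1]
    · -- exclude c - 1 : forward up to pos r c - 1, backward from pos r c
      by_cases hv : pos r v < pos r c
      · exact reachF hn hrc _ (pos r c - 1) (by omega)
          (fun e he => by simp only [Set.mem_setOf_eq]; intro hh; rw [hh] at he; omega)
          (pos r v) v rfl (by omega)
      · exact reachB hn hrc _ (pos r c) le_rfl
          (fun e he => by simp only [Set.mem_setOf_eq]; intro hh; rw [hh] at he; omega)
          (n - 1 - pos r v) v (by have := pos_lt r v; omega) (by omega)
    · -- exclude c : forward up to pos r c, backward from pos r c + 1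
      by_cases hv : pos r v ≤ pos r c
      · exact reachF hn hrc _ (pos r c) le_rfl
          (fun e he => by
            simp only [Set.mem_setOf_eq]; intro hh; rw [hh] at he; omega)
          (pos r v) v rfl hv
      · exact reachB hn hrc _ (pos r c + 1) (by omega)
          (fun e he => by
            simp only [Set.mem_setOf_eq]; intro hh; rw [hh] at he; omega)
          (n - 1 - pos r v) v (by have := pos_lt r v; omega) (by omega)


lemma mem_PSet (hn : 3 ≤ n) (w : Fin n → ℝ) (hw : ∀ e, 0 ≤ w e)
    (e₁ e₂ e₃ : Fin n) (h12 : e₁ ≠ e₂) (h13 : e₁ ≠ e₃) (h23 : e₂ ≠ e₃)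
    (hw12 : w e₁ ≤ w e₂) (hw23 : w e₂ ≤ w e₃)
    (hmin : ∀ e, e ≠ e₁ → e ≠ e₂ → e ≠ e₃ → w e₃ ≤ w e)
    (c : Fin n) (hc1 : c ∈ cycEnds n e₁) (hc2 : c ∈ cycEnds n e₂)
    (r : Fin n) (hrc : r ≠ c) :
    min (w e₁ + w e₂) (w e₃) ∈ PSet hn w r := by
  have he1 : e₁ = c - 1 ∨ e₁ = c := by
    rcases Sym2.mem_iff.mp hc1 with h | h
    · exact Or.inr h.symm
    · exact Or.inl (eq_sub_one_of_succ h.symm)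
  have he2 : e₂ = c - 1 ∨ e₂ = c := by
    rcases Sym2.mem_iff.mp hc2 with h | h
    · exact Or.inr h.symm
    · exact Or.inl (eq_sub_one_of_succ h.symm)
  set K := min (w e₁ + w e₂) (w e₃) with hK
  have hK0 : 0 ≤ K := le_min (add_nonneg (hw e₁) (hw e₂)) (hw e₃)
  have hK1 : K ≤ w e₁ + w e₂ := min_le_left _ _
  have hK3 : K ≤ w e₃ := min_le_right _ _
  set lam1 : ℝ := min (w e₁) K with hlam1
  set lam2 : ℝ := K - lam1 with hlam2
  have hl1 : 0 ≤ lam1 := le_min (hw e₁) hK0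
  have hl2 : 0 ≤ lam2 := by rw [hlam2]; have := min_le_right (w e₁) K; linarith
  refine ⟨dOr r c, dOr_isOr hn r c, dOr_acyclic hn hrc, dOr_rooted hn hrc,
    2, ![lam1, lam2], ![{e | e ≠ e₂}, {e | e ≠ e₁}], ?_, ?_, ?_, ?_⟩
  · intro i
    fin_cases i <;> simp [hl1, hl2]
  · intro i
    fin_cases i <;> simp only [Matrix.cons_val_zero, Matrix.cons_val_one, Matrix.head_cons]
    · exact isArb hn hrc e₂ he2
    · exact isArb hn hrc e₁ he1
  · intro e _
    rw [Fin.sum_univ_two]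
    simp only [Matrix.cons_val_zero, Matrix.cons_val_one, Matrix.head_cons,
      Set.mem_setOf_eq]
    by_cases h1 : e = e₂
    · rw [if_neg (by rw [h1]; simp), if_pos (by rw [h1]; exact Ne.symm h12)]
      rw [h1, hlam2]
      rcases le_total (w e₁) K with h | h
      · rw [hlam1, min_eq_left h]; linarith
      · rw [hlam1, min_eq_right h]; linarith [hw e₂]
    · by_cases h2 : e = e₁
      · rw [if_pos (by rw [h2]; exact h12), if_neg (by rw [h2]; simp)]
        rw [h2]
        have := min_le_left (w e₁) K
        rw [hlam1] at *
        linarith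
      · rw [if_pos h1, if_pos h2]
        have hwe : w e₃ ≤ w e := by
          by_cases h3 : e = e₃
          · rw [h3]
          · exact hmin e h2 h1 h3
        rw [hlam2]
        linarith
  · rw [Fin.sum_univ_two]
    simp only [Matrix.cons_val_zero, Matrix.cons_val_one, Matrix.head_cons]
    rw [hlam2]
    ring

end Stmt9

/-- In the cycle `C_n` (`n ≥ 3`) with nonnegative weights, if the two
cheapest edges `e₁, e₂` share a vertex `c` (and `e₃` is a third-cheapest edge), then
`k(C_n, w) = min (w e₁ + w e₂) (w e₃)`, and this value is achieved for every root
`r ≠ c` (orienting all edges toward the sink `c`). -/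
theorem stmt_9 {n : ℕ} [NeZero n] (hn : 3 ≤ n) (w : Fin n → ℝ) (hw : ∀ e, 0 ≤ w e)
    (e₁ e₂ e₃ : Fin n) (h12 : e₁ ≠ e₂) (h13 : e₁ ≠ e₃) (h23 : e₂ ≠ e₃)
    (hw12 : w e₁ ≤ w e₂) (hw23 : w e₂ ≤ w e₃)
    (hmin : ∀ e, e ≠ e₁ → e ≠ e₂ → e ≠ e₃ → w e₃ ≤ w e)
    (c : Fin n) (hc1 : c ∈ cycEnds n e₁) (hc2 : c ∈ cycEnds n e₂) :
    kAll (cycEnds n) Set.univ Set.univ w = min (w e₁ + w e₂) (w e₃) ∧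
    ∀ r : Fin n, r ≠ c →
      kOn (cycEnds n) Set.univ Set.univ w r = min (w e₁ + w e₂) (w e₃) := by
  classical
  set K := min (w e₁ + w e₂) (w e₃) with hK
  have hK0 : 0 ≤ K := le_min (add_nonneg (hw e₁) (hw e₂)) (hw e₃)
  have hub : ∀ r x, x ∈ Stmt9.PSet hn w r → x ≤ K := fun r x hx =>
    Stmt9.upper hn w hw e₁ e₂ e₃ h12 h13 h23 hw12 hw23 hmin r x hx
  have hkOn_sSup : ∀ r : Fin n, kOn (cycEnds n) Set.univ Set.univ w r
      = sSup (Stmt9.PSet hn w r) := fun r => rfl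
  have hkOn_le : ∀ r : Fin n, kOn (cycEnds n) Set.univ Set.univ w r ≤ K := by
    intro r
    rw [hkOn_sSup r]
    exact Real.sSup_le (hub r) hK0
  have hkOn_eq : ∀ r : Fin n, r ≠ c → kOn (cycEnds n) Set.univ Set.univ w r = K := by
    intro r hr
    have hmem := Stmt9.mem_PSet hn w hw e₁ e₂ e₃ h12 h13 h23 hw12 hw23 hmin c hc1 hc2 r hr
    refine le_antisymm (hkOn_le r) ?_
    rw [hkOn_sSup r]
    exact le_csSup ⟨K, fun x hx => hub r x hx⟩ hmem
  refine ⟨?_, hkOn_eq⟩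
  unfold kAll
  refine le_antisymm ?_ ?_
  · refine Real.sSup_le ?_ hK0
    rintro y ⟨r, -, rfl⟩
    exact hkOn_le r
  · have hcc : c + 1 ≠ c := Stmt9.succ_ne hn c
    refine le_csSup ⟨K, ?_⟩ ⟨c + 1, Set.mem_univ _, hkOn_eq (c + 1) hcc⟩
    rintro y ⟨r, -, rfl⟩
    exact hkOn_le r
end

section
/- Let C_n (n ≥ 3) be a cycle with nonnegative edge weights and minimum-weight edge e₁. If e₂ (second-smallest weight edge) is not adjacent to e₁, and e, f are the two edges adjacent to e₁ with w(e) ≤ w(f), then k(C_n, w) = min{ w(e₁) + w(e), w(e₂) }. -/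
open scoped Classical

variable {V E : Type*}

open Fin.CommRing

lemma modbig {a n : ℕ} (h1 : n ≤ a) (h2 : a < 2*n) : a % n = a - n := by
  rw [Nat.mod_eq_sub_mod h1]; exact Nat.mod_eq_of_lt (by omega)

lemma val_one_of {n : ℕ} (hn : 3 ≤ n) [NeZero n] : (1 : Fin n).val = 1 := by
  rw [Fin.val_one']; exact Nat.mod_eq_of_lt (by omega)

lemma one_ne_zero_fin {n : ℕ} (hn : 3 ≤ n) [NeZero n] : (1 : Fin n) ≠ 0 := by
  intro h; rw [Fin.ext_iff, val_one_of hn] at h; simp at h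

lemma val_ne_zero_fin {n : ℕ} [NeZero n] {x : Fin n} (h : x ≠ 0) : x.val ≠ 0 := by
  intro h'; exact h (Fin.ext (by simp [h']))

lemma val_sub_one {n : ℕ} (hn : 3 ≤ n) [NeZero n] (x : Fin n) (hx : x ≠ 0) :
    (x - 1).val = x.val - 1 := by
  have h1 : x.val ≠ 0 := val_ne_zero_fin hx
  have h2 : x.val < n := x.isLt
  rw [Fin.sub_def]
  simp only [val_one_of hn]
  have : n - 1 + x.val < 2 * n := by omega
  rw [modbig (by omega) this]; omega

lemma val_add_val_eq_n {n : ℕ} (hn : 3 ≤ n) [NeZero n] {a b : Fin n} (ha : a ≠ 0)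
    (hab : a + b = 0) : a.val + b.val = n := by
  have hb : b ≠ 0 := by rintro rfl; simp at hab; exact ha hab
  have h0 : (a + b).val = 0 := by rw [hab]; rfl
  rw [Fin.val_add] at h0
  have h1 : a.val ≠ 0 := val_ne_zero_fin ha
  have h2 : b.val ≠ 0 := val_ne_zero_fin hb
  have h3 : a.val < n := a.isLt
  have h4 : b.val < n := b.isLt
  by_cases h : a.val + b.val < n
  · rw [Nat.mod_eq_of_lt h] at h0; omega
  · rw [modbig (by omega) (by omega)] at h0; omega

lemma flip_lemma {n : ℕ} [NeZero n] (σ : Fin n → Bool) (j : Fin n) :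
    ∀ m : ℕ, σ j = false → σ (j + (m : Fin n)) = true →
    ∃ t : ℕ, 1 ≤ t ∧ t ≤ m ∧ σ (j + (t : Fin n) - 1) = false ∧ σ (j + (t : Fin n)) = true := by
  intro m
  induction m with
  | zero => intro h1 h2; simp at h2; rw [h2] at h1; exact absurd h1 (by simp)
  | succ m ih =>
    intro h1 h2
    by_cases h : σ (j + (m : Fin n)) = true
    · obtain ⟨t, ht1, ht2, ht3, ht4⟩ := ih h1 h
      exact ⟨t, ht1, by omega, ht3, ht4⟩
    · refine ⟨m + 1, by omega, le_refl _, ?_, h2⟩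
      have : (((m : ℕ) + 1 : ℕ) : Fin n) = (m : Fin n) + 1 := by push_cast; ring
      rw [this, add_sub_assoc]
      simpa using eq_false_of_ne_true h

lemma no_two_sinks {n : ℕ} (hn : 3 ≤ n) [NeZero n] (σ : Fin n → Bool) (r : Fin n)
    (hr : ∀ v : Fin n, σ (v - 1) = false → σ v = true → v = r)
    (v₁ v₂ : Fin n) (h12 : v₁ ≠ v₂)
    (h1a : σ (v₁ - 1) = true) (h1b : σ v₁ = false)
    (h2a : σ (v₂ - 1) = true) (h2b : σ v₂ = false) : False := by
  have hsub1 : v₂ - v₁ ≠ 0 := sub_ne_zero_of_ne (Ne.symm h12)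
  have hsub2 : v₁ - v₂ ≠ 0 := sub_ne_zero_of_ne h12
  set A := (v₂ - v₁).val with hA
  set B := (v₁ - v₂).val with hB
  have hAB : A + B = n := val_add_val_eq_n hn hsub1 (by ring)
  have hA1 : A ≠ 0 := val_ne_zero_fin hsub1
  have hB1 : B ≠ 0 := val_ne_zero_fin hsub2
  have hAn : A < n := (v₂ - v₁).isLt
  -- m₁ = A - 1
  have hm1 : (v₂ - 1 - v₁).val = A - 1 := by
    have : v₂ - 1 - v₁ = (v₂ - v₁) - 1 := by ring
    rw [this, val_sub_one hn _ hsub1]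
  have hm2 : (v₁ - 1 - v₂).val = B - 1 := by
    have : v₁ - 1 - v₂ = (v₁ - v₂) - 1 := by ring
    rw [this, val_sub_one hn _ hsub2]
  -- find source in arc from v₁ to v₂ - 1
  obtain ⟨t₁, ht11, ht12, ht13, ht14⟩ := flip_lemma σ v₁ ((v₂ - 1 - v₁).val) h1b
    (by rw [Fin.cast_val_eq_self]; have : v₁ + (v₂ - 1 - v₁) = v₂ - 1 := by ring
        rw [this]; exact h2a)
  obtain ⟨t₂, ht21, ht22, ht23, ht24⟩ := flip_lemma σ v₂ ((v₁ - 1 - v₂).val) h2b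
    (by rw [Fin.cast_val_eq_self]; have : v₂ + (v₁ - 1 - v₂) = v₁ - 1 := by ring
        rw [this]; exact h1a)
  have hr1 : v₁ + (t₁ : Fin n) = r := hr _ ht13 ht14
  have hr2 : v₂ + (t₂ : Fin n) = r := hr _ ht23 ht24
  rw [hm1] at ht12
  rw [hm2] at ht22
  -- val computations
  have hv1 : (r - v₁).val = t₁ := by
    rw [← hr1]; have : v₁ + (t₁ : Fin n) - v₁ = (t₁ : Fin n) := by ring
    rw [this]; exact Fin.val_cast_of_lt (by omega)
  have hv2 : (r - v₂).val = t₂ := by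
    rw [← hr2]; have : v₂ + (t₂ : Fin n) - v₂ = (t₂ : Fin n) := by ring
    rw [this]; exact Fin.val_cast_of_lt (by omega)
  have key : r - v₁ = (r - v₂) + (v₂ - v₁) := by ring
  have : t₁ = (t₂ + A) % n := by rw [← hv1, ← hv2, hA, key, Fin.val_add]
  rw [Nat.mod_eq_of_lt (by omega)] at this
  omega
lemma mem_cycEnds {n : ℕ} [NeZero n] {v g : Fin n} :
    v ∈ cycEnds n g ↔ g = v ∨ g = v - 1 := by
  unfold cycEnds
  rw [Sym2.mem_iff]
  constructor
  · rintro (rfl | h)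
    · exact Or.inl rfl
    · right; rw [h]; ring
  · rintro (rfl | rfl)
    · exact Or.inl rfl
    · right; ring

lemma cyc_nondiag {n : ℕ} (hn : 3 ≤ n) [NeZero n] (g : Fin n) : ¬ (cycEnds n g).IsDiag := by
  unfold cycEnds
  rw [Sym2.mk_isDiag_iff]
  intro h
  exact one_ne_zero_fin hn (by linear_combination -h)

lemma stmt10_upper {n : ℕ} (hn : 3 ≤ n) [NeZero n] (w : Fin n → ℝ) (e₁ e₂ : Fin n)
    (hmin1 : ∀ g, w e₁ ≤ w g) (hmin2 : ∀ g, g ≠ e₁ → w e₂ ≤ w g)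
    (hnadj : ∀ x : Fin n, ¬ (x ∈ cycEnds n e₁ ∧ x ∈ cycEnds n e₂))
    (r : Fin n) (d : Fin n → Fin n × Fin n)
    (hor : IsOrientation (cycEnds n) Set.univ d)
    (hroot : RootedAt (cycEnds n) Set.univ Set.univ d r)
    {t : ℕ} (lam : Fin t → ℝ) (A : Fin t → Set (Fin n))
    (harb : ∀ i, IsArbM (cycEnds n) Set.univ Set.univ d r (A i))
    (hcap : ∀ g ∈ Set.univ, ∑ i, (if g ∈ A i then lam i else 0) ≤ w g) :
    ∑ i, lam i ≤ w e₂ := by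
  classical
  have h10 : (1 : Fin n) ≠ 0 := one_ne_zero_fin hn
  have hd : ∀ i : Fin n, d i = (i, i+1) ∨ d i = (i+1, i) := by
    intro i
    have h := hor i (Set.mem_univ i) (cyc_nondiag hn i)
    unfold cycEnds at h
    rw [Sym2.eq_iff] at h
    rcases h with ⟨h1, h2⟩ | ⟨h1, h2⟩
    · left; rw [Prod.ext_iff]; exact ⟨h1.symm, h2.symm⟩
    · right; rw [Prod.ext_iff]; exact ⟨h2.symm, h1.symm⟩
  set σ : Fin n → Bool := fun i => if d i = (i, i+1) then true else false with hσ
  have hσt : ∀ i, σ i = true → d i = (i, i+1) := by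
    intro i h; by_contra hh; simp only [hσ, if_neg hh] at h; exact Bool.false_ne_true h
  have hσf : ∀ i, σ i = false → d i = (i+1, i) := by
    intro i h
    rcases hd i with hh | hh
    · simp only [hσ, if_pos hh] at h; exact absurd h (by simp)
    · exact hh
  have head_mem : ∀ g : Fin n, (d g).2 ∈ cycEnds n g := by
    intro g
    rcases hd g with h | h <;> rw [h] <;> unfold cycEnds <;> simp
  have sink_of_missing : ∀ (g : Fin n) (i : Fin t), g ∉ A i →
      σ ((d g).2 - 1) = true ∧ σ ((d g).2) = false := by
    intro g i hgi
    set v := (d g).2 with hv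
    have hvne : v ≠ r := by
      intro hvr
      exact hroot.2.1 (d g).1 ⟨g, Set.mem_univ _, cyc_nondiag hn g,
        by rw [← hvr]⟩
    obtain ⟨g', ⟨hg'A, hg'h⟩, _⟩ := (harb i).2.2.1 v (Set.mem_univ v) hvne
    have hgg' : g' ≠ g := by rintro rfl; exact hgi hg'A
    have hgmem : g = v ∨ g = v - 1 := mem_cycEnds.mp (head_mem g)
    have hg'mem : g' = v ∨ g' = v - 1 := by
      have := head_mem g'
      rw [hg'h] at this
      exact mem_cycEnds.mp this
    have hv1 : v - 1 ≠ v := by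
      intro h
      exact h10 (by linear_combination -h)
    have hhead : (d (v-1)).2 = v ∧ (d v).2 = v := by
      rcases hgmem with hg1 | hg1 <;> rcases hg'mem with hg2 | hg2
      · exact absurd (hg2.trans hg1.symm) hgg'
      · exact ⟨by have h' := hg'h; rwa [hg2] at h', by have h' : (d g).2 = v := hv.symm; rwa [hg1] at h'⟩
      · exact ⟨by have h' : (d g).2 = v := hv.symm; rwa [hg1] at h', by have h' := hg'h; rwa [hg2] at h'⟩
      · exact absurd (hg2.trans hg1.symm) hgg'
    constructor
    · rcases hd (v-1) with h | h
      · simp only [hσ, if_pos h]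
      · exfalso
        have := hhead.1
        rw [h] at this
        exact hv1 this
    · rcases hd v with h | h
      · exfalso
        have := hhead.2
        rw [h] at this
        exact h10 (by linear_combination this)
      · rw [hσ]
        simp only
        rw [if_neg]
        intro hh
        rw [h, Prod.ext_iff] at hh
        exact h10 (by linear_combination hh.1)
  have source_unique : ∀ v : Fin n, σ (v - 1) = false → σ v = true → v = r := by
    intro v h1 h2
    apply hroot.2.2 v (Set.mem_univ v)
    rintro u ⟨g, -, -, hg⟩
    have hgv : (d g).2 = v := by rw [hg]
    have hmem : g = v ∨ g = v - 1 := mem_cycEnds.mp (hgv ▸ head_mem g)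
    rcases hmem with rfl | rfl
    · have := hσt g h2
      rw [this] at hgv
      exact h10 (by linear_combination hgv)
    · have := hσf _ h1
      rw [this] at hgv
      simp only at hgv
      have hv1 : v - 1 ≠ v := fun h => h10 (by linear_combination -h)
      exact hv1 hgv
  by_cases hc2 : ∀ i, e₂ ∈ A i
  · calc ∑ i, lam i = ∑ i, (if e₂ ∈ A i then lam i else 0) :=
          Finset.sum_congr rfl (fun i _ => (if_pos (hc2 i)).symm)
    _ ≤ w e₂ := hcap e₂ (Set.mem_univ _)
  · push_neg at hc2
    obtain ⟨i₂, hi₂⟩ := hc2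
    have hs2 := sink_of_missing e₂ i₂ hi₂
    by_cases hc1 : ∀ i, e₁ ∈ A i
    · calc ∑ i, lam i = ∑ i, (if e₁ ∈ A i then lam i else 0) :=
            Finset.sum_congr rfl (fun i _ => (if_pos (hc1 i)).symm)
      _ ≤ w e₁ := hcap e₁ (Set.mem_univ _)
      _ ≤ w e₂ := hmin1 e₂
    · push_neg at hc1
      obtain ⟨i₁, hi₁⟩ := hc1
      have hs1 := sink_of_missing e₁ i₁ hi₁
      have hne : (d e₁).2 ≠ (d e₂).2 := by
        intro h
        exact hnadj (d e₁).2 ⟨head_mem e₁, h ▸ head_mem e₂⟩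
      exact absurd (no_two_sinks hn σ r source_unique _ _ hne hs1.1 hs1.2 hs2.1 hs2.2) id

def cycOrient {n : ℕ} [NeZero n] (s : Fin n) : Fin n → Fin n × Fin n :=
  fun i => if i = s then (s + 1, s) else (i, i + 1)

lemma stmt10_lower {n : ℕ} (hn : 3 ≤ n) [NeZero n] (w : Fin n → ℝ) (hw : ∀ g, 0 ≤ w g)
    (e₁ e₂ : Fin n) (hmin2 : ∀ g, g ≠ e₁ → w e₂ ≤ w g) :
    ∃ d : Fin n → Fin n × Fin n, IsOrientation (cycEnds n) Set.univ d ∧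
      AcyclicOn (cycEnds n) Set.univ d ∧
      RootedAt (cycEnds n) Set.univ Set.univ d (e₁ + 1) ∧
      ∃ (t : ℕ) (lam : Fin t → ℝ) (A : Fin t → Set (Fin n)),
        (∀ i, 0 ≤ lam i) ∧ (∀ i, IsArbM (cycEnds n) Set.univ Set.univ d (e₁ + 1) (A i)) ∧
        (∀ g ∈ Set.univ, ∑ i, (if g ∈ A i then lam i else 0) ≤ w g) ∧
        w e₂ = ∑ i, lam i := by
  classical
  have h10 : (1 : Fin n) ≠ 0 := one_ne_zero_fin hn
  set r₀ : Fin n := e₁ + 1 with hr₀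
  set d₀ : Fin n → Fin n × Fin n := cycOrient e₁ with hd₀
  have hd₀e : d₀ e₁ = (e₁ + 1, e₁) := by simp [hd₀, cycOrient]
  have hd₀n : ∀ i : Fin n, i ≠ e₁ → d₀ i = (i, i + 1) := by
    intro i h; simp [hd₀, cycOrient, h]
  set φ : Fin n → ℕ := fun v => (v - r₀).val with hφ
  have arc_incr : ∀ u v, arcRel (cycEnds n) Set.univ d₀ u v → φ u < φ v := by
    rintro u v ⟨g, -, -, hg⟩
    by_cases hgs : g = e₁
    · rw [hgs, hd₀e] at hg
      have hu : e₁ + 1 = u := congrArg Prod.fst hg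
      have hv : e₁ = v := congrArg Prod.snd hg
      subst hu; subst hv
      have h1 : φ (e₁ + 1) = 0 := by simp [hφ, hr₀]
      have h2 : φ e₁ ≠ 0 := by
        simp only [hφ]
        apply val_ne_zero_fin
        intro h
        exact h10 (by linear_combination -h)
      omega
    · rw [hd₀n g hgs] at hg
      have hu : g = u := congrArg Prod.fst hg
      have hv : g + 1 = v := congrArg Prod.snd hg
      subst hu; subst hv
      have hne : g + 1 - r₀ ≠ 0 := by
        intro h
        apply hgs
        have : g + 1 = r₀ := by linear_combination h
        rw [hr₀] at this
        exact add_right_cancel this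
      have hsub : (g + 1 - r₀ - 1).val = (g + 1 - r₀).val - 1 := val_sub_one hn _ hne
      have heq : g + 1 - r₀ - 1 = g - r₀ := by ring
      rw [heq] at hsub
      have := val_ne_zero_fin hne
      simp only [hφ]
      omega
  refine ⟨d₀, ?_, ?_, ?_, ?_⟩
  · -- IsOrientation
    intro i _ _
    by_cases h : i = e₁
    · rw [h, hd₀e]
      show cycEnds n e₁ = s(e₁ + 1, e₁)
      unfold cycEnds
      exact Sym2.eq_swap
    · rw [hd₀n i h]
      rfl
  · -- Acyclic
    intro v hv
    have mono : ∀ a b, Relation.TransGen (arcRel (cycEnds n) Set.univ d₀) a b → φ a < φ b := by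
      intro a b h
      induction h with
      | single h => exact arc_incr _ _ h
      | tail _ h ih => exact lt_trans ih (arc_incr _ _ h)
    exact lt_irrefl _ (mono v v hv)
  · -- RootedAt
    refine ⟨Set.mem_univ _, ?_, ?_⟩
    · rintro u ⟨g, -, -, hg⟩
      by_cases h : g = e₁
      · rw [h, hd₀e] at hg
        have h2 : e₁ = r₀ := congrArg Prod.snd hg
        rw [hr₀] at h2
        exact h10 (by linear_combination -h2)
      · rw [hd₀n g h] at hg
        have : g + 1 = r₀ := congrArg Prod.snd hg
        exact h (add_right_cancel (this.trans hr₀))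
    · intro v _ hnoarc
      by_contra hvr
      by_cases h : v = e₁
      · subst h
        exact hnoarc (v + 1) ⟨v, Set.mem_univ _, cyc_nondiag hn v, hd₀e⟩
      · have hv1 : v - 1 ≠ e₁ := by
          intro hh
          apply hvr
          rw [hr₀, ← hh]
          ring
        exact hnoarc (v - 1) ⟨v - 1, Set.mem_univ _, cyc_nondiag hn _, by
          rw [hd₀n _ hv1]
          congr 1
          ring⟩
  · -- packing
    refine ⟨1, fun _ => w e₂, fun _ => {g | g ≠ e₁}, fun _ => ?_, fun _ => ?_, ?_, ?_⟩
    · have := hmin2 (e₁ + 1) (by intro hh; exact h10 (by linear_combination hh))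
      have h0 := hw (e₁ + 1)
      linarith [hw e₂, hmin2 (e₁+1) (by intro hh; exact h10 (by linear_combination hh))]
    · -- IsArbM
      refine ⟨fun g _ => Set.mem_univ g, fun g _ => cyc_nondiag hn g, ?_, ?_, ?_⟩
      · intro v _ hvr
        have hv1 : v - 1 ≠ e₁ := by
          intro hh; apply hvr; rw [hr₀, ← hh]; ring
        refine ⟨v - 1, ⟨hv1, by rw [hd₀n _ hv1]; simp⟩, ?_⟩
        rintro g ⟨hgA, hgh⟩
        rw [hd₀n g hgA] at hgh
        simp at hgh
        rw [← hgh]; ring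
      · intro g hgA
        refine ⟨Set.mem_univ _, Set.mem_univ _, ?_⟩
        rw [hd₀n g hgA]
        intro hh
        simp at hh
        exact hgA (add_right_cancel (hh.trans hr₀))
      · intro v _
        have reach : ∀ k : ℕ, ∀ v : Fin n, (v - r₀).val = k →
            Relation.ReflTransGen (fun a b => ∃ e ∈ {g : Fin n | g ≠ e₁}, d₀ e = (a, b)) r₀ v := by
          intro k
          induction k using Nat.strong_induction_on with
          | _ k ih =>
            intro v hk
            by_cases hvr : v = r₀
            · subst hvr; exact Relation.ReflTransGen.refl
            · have hne : v - r₀ ≠ 0 := sub_ne_zero_of_ne hvr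
              have hk0 : k ≠ 0 := by rw [← hk]; exact val_ne_zero_fin hne
              have heq : v - 1 - r₀ = (v - r₀) - 1 := by ring
              have hprev : (v - 1 - r₀).val = k - 1 := by
                rw [heq, val_sub_one hn _ hne, hk]
              have hstep := ih (k - 1) (by omega) (v - 1) hprev
              refine hstep.tail ⟨v - 1, ?_, ?_⟩
              · intro hh; apply hvr; rw [hr₀, ← hh]; ring
              · have hv1 : v - 1 ≠ e₁ := by
                  intro hh; apply hvr; rw [hr₀, ← hh]; ring
                rw [hd₀n _ hv1]
                congr 1
                ring
        exact reach _ v rfl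
    · intro g _
      rw [Fin.sum_univ_one]
      by_cases h : g = e₁
      · rw [h, if_neg (by simp)]
        exact hw e₁
      · rw [if_pos (by simpa using h)]
        exact hmin2 g h
    · rw [Fin.sum_univ_one]

/-- In the cycle `C_n` (`n ≥ 3`) with nonnegative weights, if a
second-cheapest edge `e₂` is not adjacent to the cheapest edge `e₁`, and `e, f` are the
two edges adjacent to `e₁` with `w e ≤ w f`, then
`k(C_n, w) = min (w e₁ + w e) (w e₂)`. -/
theorem stmt_10 {n : ℕ} [NeZero n] (hn : 3 ≤ n) (w : Fin n → ℝ) (hw : ∀ g, 0 ≤ w g)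
    (e₁ e₂ : Fin n) (h21 : e₂ ≠ e₁)
    (hmin1 : ∀ g, w e₁ ≤ w g) (hmin2 : ∀ g, g ≠ e₁ → w e₂ ≤ w g)
    (hnadj : ∀ x : Fin n, ¬ (x ∈ cycEnds n e₁ ∧ x ∈ cycEnds n e₂))
    (e f : Fin n) (hef : e ≠ f) (he1 : e ≠ e₁) (hf1 : f ≠ e₁)
    (hadje : ∃ x : Fin n, x ∈ cycEnds n e ∧ x ∈ cycEnds n e₁)
    (hadjf : ∃ x : Fin n, x ∈ cycEnds n f ∧ x ∈ cycEnds n e₁)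
    (hewf : w e ≤ w f) :
    kAll (cycEnds n) Set.univ Set.univ w = min (w e₁ + w e) (w e₂) := by
  have h10 := one_ne_zero_fin hn
  have hrhs : min (w e₁ + w e) (w e₂) = w e₂ := by
    apply min_eq_right
    have h1 := hmin2 e he1
    have h2 := hw e₁
    linarith
  rw [hrhs]
  have hub : ∀ r : Fin n, kOn (cycEnds n) Set.univ Set.univ w r ≤ w e₂ := by
    intro r
    unfold kOn
    apply Real.sSup_le _ (hw e₂)
    rintro x ⟨d, hor, hacy, hroot, t, lam, A, hlam, harb, hcap, rfl⟩
    exact stmt10_upper hn w e₁ e₂ hmin1 hmin2 hnadj r d hor hroot lam A harb hcap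
  obtain ⟨d, hor, hacy, hroot, pack⟩ := stmt10_lower hn w hw e₁ e₂ hmin2
  have hlow : w e₂ ≤ kOn (cycEnds n) Set.univ Set.univ w (e₁ + 1) := by
    unfold kOn
    apply le_csSup
    · refine ⟨w e₂, ?_⟩
      rintro x ⟨d', hor', hacy', hroot', t, lam, A, hlam, harb, hcap, rfl⟩
      exact stmt10_upper hn w e₁ e₂ hmin1 hmin2 hnadj _ d' hor' hroot' lam A harb hcap
    · exact ⟨d, hor, hacy, hroot, pack⟩
  apply le_antisymm
  · unfold kAll
    apply Real.sSup_le _ (hw e₂)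
    rintro y ⟨r, -, rfl⟩
    exact hub r
  · refine le_trans hlow ?_
    unfold kAll
    apply le_csSup
    · exact ⟨w e₂, by rintro y ⟨r, -, rfl⟩; exact hub r⟩
    · exact ⟨e₁ + 1, Set.mem_univ _, rfl⟩
end

section
/- There is an outerplanar graph G (a 4-cycle) with nonnegative edge weights w such that the maximum weighted packing of (undirected) spanning trees k_u(G, w) = 2 strictly exceeds k(G, w) = 1, the maximum over roots r and r-acyclic orientations of the maximum weighted packing of r-arborescences. Concretely, take the 4-cycle abcda with w({a,b}) = w({c,d}) = 2 and w({a,d}) = w({b,c}) = 1. -/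
open scoped Classical

variable {V E : Type*}

/-- `kU ends w`: the maximum value of a weighted packing of (undirected) spanning trees
of the multigraph with edge-endpoint map `ends`, subject to the capacities `w`. A
spanning tree is a set of `|V| - 1` edges connecting all vertices. -/
noncomputable def kU [Fintype V] [Fintype E] (ends : E → Sym2 V) (w : E → ℝ) : ℝ :=
  sSup {x : ℝ | ∃ (t : ℕ) (lam : Fin t → ℝ) (T : Fin t → Set E),
    (∀ i, 0 ≤ lam i) ∧
    (∀ i, (∀ a b : V, Relation.ReflTransGen
        (fun x y => ∃ e ∈ T i, ends e = s(x, y)) a b) ∧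
      (T i).ncard = Fintype.card V - 1) ∧
    (∀ e, ∑ i, (if e ∈ T i then lam i else 0) ≤ w e) ∧
    x = ∑ i, lam i}


section AuxStmt11

private lemma aux_nondiag : ∀ i : Fin 4, ¬ (s(i, i+1) : Sym2 (Fin 4)).IsDiag := by decide

private lemma aux_orient_cases (d : Fin 4 → Fin 4 × Fin 4)
    (hd : IsOrientation (fun i : Fin 4 => s(i, i+1)) Set.univ d) (i : Fin 4) :
    d i = (i, i+1) ∨ d i = (i+1, i) := by
  have h := hd i (Set.mem_univ i) (aux_nondiag i)
  rw [Sym2.eq_iff] at h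
  rcases h with ⟨h1, h2⟩ | ⟨h1, h2⟩
  · left; rw [Prod.ext_iff]; exact ⟨h1.symm, h2.symm⟩
  · right; rw [Prod.ext_iff]; exact ⟨h2.symm, h1.symm⟩

private def auxDD (b : Fin 4 → Bool) (e : Fin 4) : Fin 4 × Fin 4 :=
  if b e then (e, e+1) else (e+1, e)

private lemma aux_core : ∀ b : Fin 4 → Bool,
    (∃ v e₀ : Fin 4, (e₀ = 1 ∨ e₀ = 3) ∧ (auxDD b e₀).2 = v ∧ ∀ e, (auxDD b e).2 = v → e = e₀)
    ∨ (∃ v₁ v₂ : Fin 4, v₁ ≠ v₂ ∧ (∀ e, (auxDD b e).2 ≠ v₁) ∧ (∀ e, (auxDD b e).2 ≠ v₂)) := by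
  decide

private lemma aux_key (d : Fin 4 → Fin 4 × Fin 4) (r : Fin 4)
    (hd : ∀ i, d i = (i, i+1) ∨ d i = (i+1, i))
    (hr : RootedAt (fun i : Fin 4 => s(i, i+1)) Set.univ Set.univ d r) :
    ∃ v e₀ : Fin 4, (e₀ = 1 ∨ e₀ = 3) ∧ (d e₀).2 = v ∧ (∀ e, (d e).2 = v → e = e₀) ∧ v ≠ r := by
  have hne : ∀ v e₀ : Fin 4, (d e₀).2 = v → v ≠ r := by
    intro v e₀ hv hvr
    subst hvr
    exact hr.2.1 (d e₀).1 ⟨e₀, Set.mem_univ _, aux_nondiag e₀, by rw [← hv]⟩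
  have hnee : ∀ e : Fin 4, e ≠ e + 1 := by decide
  have hb : ∀ e, d e = auxDD (fun e => decide ((d e).2 = e + 1)) e := by
    intro e
    rcases hd e with he | he <;> simp [auxDD, he, hnee e]
  set b := (fun e => decide ((d e).2 = e + 1)) with hbdef
  rcases aux_core b with ⟨v, e₀, h1, h2, h3⟩ | ⟨v₁, v₂, hv12, hn1, hn2⟩
  · exact ⟨v, e₀, h1, by rw [hb e₀]; exact h2,
      fun e he => h3 e (by rw [← hb e]; exact he), hne v e₀ (by rw [hb e₀]; exact h2)⟩
  · exfalso
    have key2 : ∀ v' : Fin 4, (∀ e : Fin 4, (auxDD b e).2 ≠ v') → v' = r := by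
      intro v' hv'
      refine hr.2.2 v' trivial ?_
      rintro u ⟨e, -, -, he⟩
      exact hv' e (by rw [← hb e, he])
    exact hv12 ((key2 v₁ hn1).trans (key2 v₂ hn2).symm)

private lemma aux_kOn_bound (r : Fin 4) :
    ∀ x ∈ {x : ℝ | ∃ d : Fin 4 → Fin 4 × Fin 4,
      IsOrientation (fun i : Fin 4 => s(i, i+1)) Set.univ d ∧
      AcyclicOn (fun i : Fin 4 => s(i, i+1)) Set.univ d ∧
      RootedAt (fun i : Fin 4 => s(i, i+1)) Set.univ Set.univ d r ∧
      ∃ (t : ℕ) (lam : Fin t → ℝ) (A : Fin t → Set (Fin 4)),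
        (∀ i, 0 ≤ lam i) ∧
        (∀ i, IsArbM (fun i : Fin 4 => s(i, i+1)) Set.univ Set.univ d r (A i)) ∧
        (∀ e ∈ Set.univ, ∑ i, (if e ∈ A i then lam i else 0) ≤ (![2,1,2,1] : Fin 4 → ℝ) e) ∧
        x = ∑ i, lam i}, x ≤ 1 := by
  rintro x ⟨d, hor, -, hroot, t, lam, A, hlam, hA, hcap, rfl⟩
  obtain ⟨v, e₀, he₀, hhead, huniq, hvr⟩ := aux_key d r (aux_orient_cases d hor) hroot
  have hle : ∀ i, lam i ≤ (if e₀ ∈ A i then lam i else 0) := by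
    intro i
    obtain ⟨-, -, h3, -, -⟩ := hA i
    obtain ⟨e, ⟨heA, hehead⟩, -⟩ := h3 v trivial hvr
    rw [if_pos ((huniq e hehead) ▸ heA)]
  calc ∑ i, lam i ≤ ∑ i, (if e₀ ∈ A i then lam i else 0) :=
        Finset.sum_le_sum (fun i _ => hle i)
    _ ≤ (![2,1,2,1] : Fin 4 → ℝ) e₀ := hcap e₀ trivial
    _ ≤ 1 := by rcases he₀ with rfl | rfl <;> simp

private def auxd0 : Fin 4 → Fin 4 × Fin 4 := ![(0,1),(1,2),(3,2),(0,3)]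
private def auxA0 : Set (Fin 4) := {0,1,3}

private lemma aux_kOn_mem :
    (1:ℝ) ∈ {x : ℝ | ∃ d : Fin 4 → Fin 4 × Fin 4,
      IsOrientation (fun i : Fin 4 => s(i, i+1)) Set.univ d ∧
      AcyclicOn (fun i : Fin 4 => s(i, i+1)) Set.univ d ∧
      RootedAt (fun i : Fin 4 => s(i, i+1)) Set.univ Set.univ d (0 : Fin 4) ∧
      ∃ (t : ℕ) (lam : Fin t → ℝ) (A : Fin t → Set (Fin 4)),
        (∀ i, 0 ≤ lam i) ∧
        (∀ i, IsArbM (fun i : Fin 4 => s(i, i+1)) Set.univ Set.univ d (0 : Fin 4) (A i)) ∧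
        (∀ e ∈ Set.univ, ∑ i, (if e ∈ A i then lam i else 0) ≤ (![2,1,2,1] : Fin 4 → ℝ) e) ∧
        x = ∑ i, lam i} := by
  have hrank : ∀ u v : Fin 4, arcRel (fun i : Fin 4 => s(i, i+1)) Set.univ auxd0 u v →
      (![0,1,2,1] : Fin 4 → ℕ) u < (![0,1,2,1] : Fin 4 → ℕ) v := by
    rintro u v ⟨e, -, -, he⟩
    fin_cases e <;>
      (obtain ⟨rfl, rfl⟩ := Prod.mk_inj.mp he.symm) <;> simp
  refine ⟨auxd0, ?_, ?_, ?_, 1, (fun _ => 1), (fun _ => auxA0), ?_, ?_, ?_, ?_⟩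
  · intro e _ _; fin_cases e <;> decide
  · intro v h
    have mono : ∀ a b : Fin 4,
        Relation.TransGen (arcRel (fun i : Fin 4 => s(i, i+1)) Set.univ auxd0) a b →
        (![0,1,2,1] : Fin 4 → ℕ) a < (![0,1,2,1] : Fin 4 → ℕ) b := by
      intro a b h
      induction h with
      | single h => exact hrank _ _ h
      | tail _ h2 ih => exact ih.trans (hrank _ _ h2)
    exact absurd (mono v v h) (lt_irrefl _)
  · refine ⟨trivial, ?_, ?_⟩
    · rintro u ⟨e, -, -, he⟩
      have h2 : (auxd0 e).2 = 0 := congrArg Prod.snd he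
      fin_cases e <;> exact absurd h2 (by decide)
    · intro v _ hno
      fin_cases v
      · rfl
      · exact absurd (hno 0 ⟨0, trivial, aux_nondiag 0, rfl⟩) (fun h => h)
      · exact absurd (hno 1 ⟨1, trivial, aux_nondiag 1, rfl⟩) (fun h => h)
      · exact absurd (hno 0 ⟨3, trivial, aux_nondiag 3, rfl⟩) (fun h => h)
  · intro i; norm_num
  · intro i
    refine ⟨fun _ _ => trivial, fun e _ => aux_nondiag e, ?_, ?_, ?_⟩
    · intro v _ hv
      fin_cases v
      · exact absurd rfl hv
      · exact ⟨0, ⟨Or.inl rfl, rfl⟩, by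
          rintro e ⟨heA, hehead⟩
          rcases heA with rfl | rfl | rfl
          · rfl
          · exact absurd hehead (by decide)
          · exact absurd hehead (by decide)⟩
      · exact ⟨1, ⟨Or.inr (Or.inl rfl), rfl⟩, by
          rintro e ⟨heA, hehead⟩
          rcases heA with rfl | rfl | rfl
          · exact absurd hehead (by decide)
          · rfl
          · exact absurd hehead (by decide)⟩
      · exact ⟨3, ⟨Or.inr (Or.inr rfl), rfl⟩, by
          rintro e ⟨heA, hehead⟩
          rcases heA with rfl | rfl | rfl
          · exact absurd hehead (by decide)
          · exact absurd hehead (by decide)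
          · rfl⟩
    · rintro e (rfl | rfl | rfl) <;> exact ⟨trivial, trivial, by decide⟩
    · intro v _
      fin_cases v
      · exact Relation.ReflTransGen.refl
      · exact Relation.ReflTransGen.single ⟨0, Or.inl rfl, rfl⟩
      · exact (Relation.ReflTransGen.single ⟨0, Or.inl rfl, rfl⟩).tail
          ⟨1, Or.inr (Or.inl rfl), rfl⟩
      · exact Relation.ReflTransGen.single ⟨3, Or.inr (Or.inr rfl), rfl⟩
  · intro e _
    fin_cases e <;> simp [auxA0, Fin.sum_univ_succ]
  · simp

private def auxTT : Fin 2 → Set (Fin 4) := ![{0,1,2},{0,2,3}]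

private lemma aux_conn0 : ∀ a : Fin 4, Relation.ReflTransGen
    (fun x y : Fin 4 => ∃ e ∈ ({0,1,2} : Set (Fin 4)), s(e, e+1) = s(x, y)) 0 a := by
  intro a
  have s0 : s((0:Fin 4), 0+1) = s(0, 1) := rfl
  have s1 : s((1:Fin 4), 1+1) = s(1, 2) := rfl
  have s2 : s((2:Fin 4), 2+1) = s(2, 3) := rfl
  fin_cases a
  · exact .refl
  · exact .single ⟨0, Or.inl rfl, s0⟩
  · exact (Relation.ReflTransGen.single ⟨0, Or.inl rfl, s0⟩).tail ⟨1, Or.inr (Or.inl rfl), s1⟩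
  · exact ((Relation.ReflTransGen.single ⟨0, Or.inl rfl, s0⟩).tail
      ⟨1, Or.inr (Or.inl rfl), s1⟩).tail ⟨2, Or.inr (Or.inr rfl), s2⟩

private lemma aux_conn1 : ∀ a : Fin 4, Relation.ReflTransGen
    (fun x y : Fin 4 => ∃ e ∈ ({0,2,3} : Set (Fin 4)), s(e, e+1) = s(x, y)) 0 a := by
  intro a
  have s0 : s((0:Fin 4), 0+1) = s(0, 1) := rfl
  have s3 : s((3:Fin 4), 3+1) = s(0, 3) := by
    rw [show ((3:Fin 4)+1) = 0 from rfl]; exact Sym2.eq_swap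
  have s2 : s((2:Fin 4), 2+1) = s(3, 2) := by
    rw [show ((2:Fin 4)+1) = 3 from rfl]; exact Sym2.eq_swap
  fin_cases a
  · exact .refl
  · exact .single ⟨0, Or.inl rfl, s0⟩
  · exact (Relation.ReflTransGen.single ⟨3, Or.inr (Or.inr rfl), s3⟩).tail
      ⟨2, Or.inr (Or.inl rfl), s2⟩
  · exact .single ⟨3, Or.inr (Or.inr rfl), s3⟩

private lemma aux_conn (i : Fin 2) : ∀ a b : Fin 4, Relation.ReflTransGen
    (fun x y : Fin 4 => ∃ e ∈ auxTT i, s(e, e+1) = s(x, y)) a b := by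
  have hsym : Symmetric (fun x y : Fin 4 => ∃ e ∈ auxTT i, s(e, e+1) = s(x, y)) := by
    rintro x y ⟨e, he, hs⟩
    exact ⟨e, he, hs.trans (Sym2.eq_swap)⟩
  have h0 : ∀ a : Fin 4, Relation.ReflTransGen
      (fun x y : Fin 4 => ∃ e ∈ auxTT i, s(e, e+1) = s(x, y)) 0 a := by
    fin_cases i
    · exact aux_conn0
    · exact aux_conn1
  intro a b
  exact ((@Relation.ReflTransGen.symmetric _ _ ⟨fun _ _ h => hsym h⟩).symm _ _ (h0 a)).trans (h0 b)

private lemma aux_kU_mem :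
    (2:ℝ) ∈ {x : ℝ | ∃ (t : ℕ) (lam : Fin t → ℝ) (T : Fin t → Set (Fin 4)),
    (∀ i, 0 ≤ lam i) ∧
    (∀ i, (∀ a b : Fin 4, Relation.ReflTransGen
        (fun x y => ∃ e ∈ T i, (fun i : Fin 4 => s(i, i+1)) e = s(x, y)) a b) ∧
      (T i).ncard = Fintype.card (Fin 4) - 1) ∧
    (∀ e, ∑ i, (if e ∈ T i then lam i else 0) ≤ (![2,1,2,1] : Fin 4 → ℝ) e) ∧
    x = ∑ i, lam i} := by
  refine ⟨2, (fun _ => 1), auxTT, fun i => zero_le_one, ?_, ?_, by simp [Fin.sum_univ_two]⟩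
  · intro i
    refine ⟨aux_conn i, ?_⟩
    rw [show Fintype.card (Fin 4) - 1 = 3 by simp, Set.ncard_eq_three]
    fin_cases i
    · exact ⟨0, 1, 2, by decide, by decide, by decide, rfl⟩
    · exact ⟨0, 2, 3, by decide, by decide, by decide, rfl⟩
  · have m00 : (0:Fin 4) ∈ auxTT 0 := Or.inl rfl
    have m01 : (0:Fin 4) ∈ auxTT 1 := Or.inl rfl
    have m10 : (1:Fin 4) ∈ auxTT 0 := Or.inr (Or.inl rfl)
    have m11 : (1:Fin 4) ∉ auxTT 1 := by
      intro h
      rcases h with h | h | h <;> exact absurd h (by decide)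
    have m20 : (2:Fin 4) ∈ auxTT 0 := Or.inr (Or.inr rfl)
    have m21 : (2:Fin 4) ∈ auxTT 1 := Or.inr (Or.inl rfl)
    have m30 : (3:Fin 4) ∉ auxTT 0 := by
      intro h
      rcases h with h | h | h <;> exact absurd h (by decide)
    have m31 : (3:Fin 4) ∈ auxTT 1 := Or.inr (Or.inr rfl)
    have c0 : (if (0:Fin 4) ∈ auxTT 0 then (1:ℝ) else 0) +
        (if (0:Fin 4) ∈ auxTT 1 then (1:ℝ) else 0) ≤ 2 := by
      rw [if_pos m00, if_pos m01]; norm_num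
    have c1 : (if (1:Fin 4) ∈ auxTT 0 then (1:ℝ) else 0) +
        (if (1:Fin 4) ∈ auxTT 1 then (1:ℝ) else 0) ≤ 1 := by
      rw [if_pos m10, if_neg m11]; norm_num
    have c2 : (if (2:Fin 4) ∈ auxTT 0 then (1:ℝ) else 0) +
        (if (2:Fin 4) ∈ auxTT 1 then (1:ℝ) else 0) ≤ 2 := by
      rw [if_pos m20, if_pos m21]; norm_num
    have c3 : (if (3:Fin 4) ∈ auxTT 0 then (1:ℝ) else 0) +
        (if (3:Fin 4) ∈ auxTT 1 then (1:ℝ) else 0) ≤ 1 := by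
      rw [if_neg m30, if_pos m31]; norm_num
    intro e
    rw [Fin.sum_univ_two]
    fin_cases e
    · exact c0
    · exact c1
    · exact c2
    · exact c3

private lemma aux_kU_bound :
    ∀ x ∈ {x : ℝ | ∃ (t : ℕ) (lam : Fin t → ℝ) (T : Fin t → Set (Fin 4)),
    (∀ i, 0 ≤ lam i) ∧
    (∀ i, (∀ a b : Fin 4, Relation.ReflTransGen
        (fun x y => ∃ e ∈ T i, (fun i : Fin 4 => s(i, i+1)) e = s(x, y)) a b) ∧
      (T i).ncard = Fintype.card (Fin 4) - 1) ∧
    (∀ e, ∑ i, (if e ∈ T i then lam i else 0) ≤ (![2,1,2,1] : Fin 4 → ℝ) e) ∧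
    x = ∑ i, lam i}, x ≤ 2 := by
  rintro x ⟨t, lam, T, hlam, hT, hcap, rfl⟩
  have hkey : ∀ i, lam i ≤ (if (1:Fin 4) ∈ T i then lam i else 0) +
      (if (3:Fin 4) ∈ T i then lam i else 0) := by
    intro i
    by_cases h1 : (1:Fin 4) ∈ T i
    · rw [if_pos h1]; split <;> linarith [hlam i]
    by_cases h3 : (3:Fin 4) ∈ T i
    · rw [if_neg h1, if_pos h3]; linarith
    exfalso
    have hsub : T i ⊆ ({0, 2} : Set (Fin 4)) := by
      intro y hy
      fin_cases y
      · exact Or.inl rfl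
      · exact absurd hy h1
      · exact Or.inr rfl
      · exact absurd hy h3
    have hc : (T i).ncard ≤ 2 := by
      have := Set.ncard_le_ncard hsub (Set.toFinite _)
      rwa [Set.ncard_pair (by decide)] at this
    have := (hT i).2
    simp at this
    omega
  calc ∑ i, lam i ≤ ∑ i, ((if (1:Fin 4) ∈ T i then lam i else 0) +
        (if (3:Fin 4) ∈ T i then lam i else 0)) := Finset.sum_le_sum (fun i _ => hkey i)
    _ = (∑ i, (if (1:Fin 4) ∈ T i then lam i else 0)) +
        (∑ i, (if (3:Fin 4) ∈ T i then lam i else 0)) := Finset.sum_add_distrib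
    _ ≤ (![2,1,2,1] : Fin 4 → ℝ) 1 + (![2,1,2,1] : Fin 4 → ℝ) 3 := add_le_add (hcap 1) (hcap 3)
    _ ≤ 2 := by norm_num [show (![2,1,2,1] : Fin 4 → ℝ) 3 = 1 from rfl]

end AuxStmt11

/-- For the 4-cycle `abcda` (an outerplanar graph) with weights
`w(ab) = w(cd) = 2` and `w(bc) = w(da) = 1`, the maximum weighted spanning-tree packing
value is `k_u = 2`, while the broadcast value is `k = 1`; in particular `k < k_u`. -/
theorem stmt_11 :
    kU (fun i : Fin 4 => s(i, i + 1)) (![2, 1, 2, 1] : Fin 4 → ℝ) = 2 ∧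
    kAll (fun i : Fin 4 => s(i, i + 1)) Set.univ Set.univ
      (![2, 1, 2, 1] : Fin 4 → ℝ) = 1 ∧
    kAll (fun i : Fin 4 => s(i, i + 1)) Set.univ Set.univ (![2, 1, 2, 1] : Fin 4 → ℝ) <
      kU (fun i : Fin 4 => s(i, i + 1)) (![2, 1, 2, 1] : Fin 4 → ℝ) := by
  have hkU : kU (fun i : Fin 4 => s(i, i + 1)) (![2, 1, 2, 1] : Fin 4 → ℝ) = 2 :=
    IsGreatest.csSup_eq ⟨aux_kU_mem, aux_kU_bound⟩
  have hkOn0 : kOn (fun i : Fin 4 => s(i, i + 1)) Set.univ Set.univ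
      (![2, 1, 2, 1] : Fin 4 → ℝ) (0 : Fin 4) = 1 :=
    IsGreatest.csSup_eq ⟨aux_kOn_mem, aux_kOn_bound 0⟩
  have hkAll : kAll (fun i : Fin 4 => s(i, i + 1)) Set.univ Set.univ
      (![2, 1, 2, 1] : Fin 4 → ℝ) = 1 := by
    refine IsGreatest.csSup_eq ⟨⟨0, Set.mem_univ 0, hkOn0⟩, ?_⟩
    rintro x ⟨r, -, rfl⟩
    exact Real.sSup_le (aux_kOn_bound r) zero_le_one
  exact ⟨hkU, hkAll, by rw [hkU, hkAll]; norm_num⟩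
end

section
/- Let G be a simple 2-connected outerplanar graph with k chords (edges not on the outer cycle). For any root r and any r-acyclic orientation of G, the number of sinks of degree 2 is at most k + 1. -/
/-- `D` is an orientation of the simple graph `G`: every arc of `D` is along an edge of
`G`, and every edge of `G` is directed in exactly one of its two directions. -/
def IsOrientOf {V : Type*} (G : SimpleGraph V) (D : V → V → Prop) : Prop :=
  (∀ u v, D u v → G.Adj u v) ∧ ∀ u v, G.Adj u v → (D u v ↔ ¬ D v u)

/-- `p` is an edge of the outer Hamiltonian cycle `0 − 1 − ⋯ − (n-1) − 0` of `Fin n`. -/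
def IsCycEdge (n : ℕ) [NeZero n] (p : Sym2 (Fin n)) : Prop :=
  ∃ u : Fin n, p = s(u, u + 1)

/-- `{u, v}` is a chord of `G`: an edge that is not an outer-cycle edge. -/
def IsChord {n : ℕ} [NeZero n] (G : SimpleGraph (Fin n)) (u v : Fin n) : Prop :=
  G.Adj u v ∧ ¬ IsCycEdge n s(u, v)

/-- `G` is a 2-connected outerplanar graph presented with its vertices `0, 1, …, n-1`
in order along the outer Hamiltonian cycle: `G` contains all outer-cycle edges, and its
chords are pairwise noncrossing. -/
def OuterHam (n : ℕ) [NeZero n] (G : SimpleGraph (Fin n)) : Prop :=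
  (∀ u : Fin n, G.Adj u (u + 1)) ∧
  ∀ a b c d : Fin n, IsChord G a b → IsChord G c d →
    ¬ (a.val < c.val ∧ c.val < b.val ∧ b.val < d.val)

/-- The set of chords of `G` (as unordered edges). -/
def chordSet (n : ℕ) [NeZero n] (G : SimpleGraph (Fin n)) : Set (Sym2 (Fin n)) :=
  {p | p ∈ G.edgeSet ∧ ¬ IsCycEdge n p}

/-- Let `G` be a simple 2-connected outerplanar graph with `k` chords.
For any root `r` and any `r`-acyclic orientation `D` of `G`, the number of sinks of
degree `2` is at most `k + 1`. -/
theorem stmt_12 {n : ℕ} [NeZero n] (hn : 3 ≤ n) (G : SimpleGraph (Fin n))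
    [DecidableRel G.Adj] (hG : OuterHam n G) (D : Fin n → Fin n → Prop)
    (hO : IsOrientOf G D)
    (hacyc : ∀ v, ¬ Relation.TransGen D v v) (r : Fin n)
    (hroot : (∀ u, ¬ D u r) ∧ ∀ v, (∀ u, ¬ D u v) → v = r) :
    {v : Fin n | (∀ u, ¬ D v u) ∧ G.degree v = 2}.ncard ≤
      (chordSet n G).ncard + 1 := by
  classical
  have hor : ∀ u v, G.Adj u v → (D u v ↔ ¬ D v u) := hO.2
  set S : Set (Fin n) := {v | D v (v + 1)} with hS
  set T : Set (Fin n) := {v | D (v - 1) v} with hT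
  -- the sink set is contained in the set of cycle-local sinks T \ S
  have hsub : {v : Fin n | (∀ u, ¬ D v u) ∧ G.degree v = 2} ⊆ T \ S := by
    rintro v ⟨hv, -⟩
    refine ⟨?_, hv (v + 1)⟩
    have hadj : G.Adj (v - 1) v := by
      have := hG.1 (v - 1); rwa [sub_add_cancel] at this
    exact (hor (v - 1) v hadj).mpr (hv (v - 1))
  -- T is the image of S under +1, so T and S have the same ncard
  have hTim : T = (fun v => v + 1) '' S := by
    ext v
    constructor
    · intro hv
      exact ⟨v - 1, by simpa [hS, hT, sub_add_cancel] using hv, sub_add_cancel v 1⟩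
    · rintro ⟨x, hx, rfl⟩
      simpa [hT, hS, add_sub_cancel_right] using hx
  have hST : T.ncard = S.ncard := by
    rw [hTim]; exact Set.ncard_image_of_injective S (add_left_injective 1)
  -- number of local sinks equals number of local sources
  have hkey : (T \ S).ncard = (S \ T).ncard := by
    have h1 := Set.ncard_inter_add_ncard_diff_eq_ncard T S
    have h2 := Set.ncard_inter_add_ncard_diff_eq_ncard S T
    rw [Set.inter_comm] at h1
    omega
  -- every local source other than r has an incoming chord; inject into chordSet
  have hsrc : ((S \ T) \ {r}).ncard ≤ (chordSet n G).ncard := by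
    set f : Fin n → Sym2 (Fin n) :=
      fun v => if h : ∃ u, D u v then s(Classical.choose h, v) else s(v, v) with hf
    have hex : ∀ v ∈ (S \ T) \ {r}, ∃ u, D u v := by
      rintro v ⟨-, hvr⟩
      by_contra h
      push_neg at h
      exact hvr (hroot.2 v h)
    have hmem : ∀ v ∈ (S \ T) \ {r}, f v ∈ chordSet n G := by
      intro v hv
      have h := hex v hv
      obtain ⟨⟨hvS, hvT⟩, -⟩ := hv
      have hu : D (Classical.choose h) v := Classical.choose_spec h
      have hadj : G.Adj (Classical.choose h) v := hO.1 _ v hu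
      simp only [hf, dif_pos h]
      refine ⟨G.mem_edgeSet.mpr hadj, ?_⟩
      rintro ⟨w, hw⟩
      rcases Sym2.eq_iff.mp hw with ⟨h1, h2⟩ | ⟨h1, h2⟩
      · -- choose h = w, v = w + 1 : the arc is the cycle edge into v from v - 1
        have hd : D w (w + 1) := by rw [← h2, ← h1]; exact hu
        have hd' : D (v - 1) v := by rw [h2, add_sub_cancel_right]; exact hd
        exact hvT hd'
      · -- choose h = w + 1, v = w : the arc is the cycle edge into v from v + 1
        have hd : D (v + 1) v := by rw [h2, ← h1, ← h2]; exact hu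
        exact (hor v (v + 1) (hG.1 v)).mp hvS hd
    have hinj : Set.InjOn f ((S \ T) \ {r}) := by
      intro v hv w hw hvw
      have h1 := hex v hv
      have h2 := hex w hw
      simp only [hf, dif_pos h1, dif_pos h2] at hvw
      rcases Sym2.eq_iff.mp hvw with ⟨-, h⟩ | ⟨ha, hb⟩
      · exact h
      · -- crossing arcs: D a v, D b w with a = w, v = b gives a 2-cycle
        exfalso
        have hu1 := Classical.choose_spec h1
        have hu2 := Classical.choose_spec h2
        rw [ha] at hu1
        rw [← hb] at hu2
        exact hacyc v (Relation.TransGen.head hu2 (Relation.TransGen.single hu1))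
    exact Set.ncard_le_ncard_of_injOn f hmem hinj (Set.toFinite _)
  calc {v : Fin n | (∀ u, ¬ D v u) ∧ G.degree v = 2}.ncard
      ≤ (T \ S).ncard := Set.ncard_le_ncard hsub (Set.toFinite _)
    _ = (S \ T).ncard := hkey
    _ ≤ ((S \ T) \ {r}).ncard + 1 := by
        by_cases hr : r ∈ S \ T
        · have := Set.ncard_diff_singleton_add_one hr (Set.toFinite _)
          omega
        · rw [Set.diff_singleton_eq_self hr]
          exact Nat.le_succ _
    _ ≤ (chordSet n G).ncard + 1 := by omega
end

section
/- Greedy arborescence packing is optimal in acyclic digraphs: let G be an acyclic digraph rooted at r with nonnegative weights w, let e₀ be an edge of minimum positive weight, and suppose A is a spanning r-arborescence containing e₀ all of whose edges have positive weight. Then the maximum packing value for w equals w(e₀) plus the maximum packing value for w' where w'(e) = w(e) − w(e₀) for e ∈ A and w'(e) = w(e) otherwise. -/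
open scoped Classical

/-- The maximum value of a weighted packing of spanning `r`-arborescences in the
digraph `D` subject to edge capacities `w`. -/
noncomputable def packVal {V : Type*} [Fintype V] (D : V → V → Prop) (r : V)
    (w : V → V → ℝ) : ℝ :=
  sSup {x : ℝ | ∃ (t : ℕ) (lam : Fin t → ℝ) (A : Fin t → V → V → Prop),
    (∀ i, 0 ≤ lam i) ∧
    (∀ i, (∀ u v, A i u v → D u v) ∧ (∀ v, v ≠ r → ∃! u, A i u v) ∧
      (∀ u, ¬ A i u r) ∧ (∀ v, Relation.ReflTransGen (A i) r v)) ∧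
    (∀ u v, D u v → ∑ i, (if A i u v then lam i else 0) ≤ w u v) ∧
    x = ∑ i, lam i}

/-- The set of achievable packing values. -/
def packSet {V : Type*} [Fintype V] (D : V → V → Prop) (r : V)
    (w : V → V → ℝ) : Set ℝ :=
  {x : ℝ | ∃ (t : ℕ) (lam : Fin t → ℝ) (A : Fin t → V → V → Prop),
    (∀ i, 0 ≤ lam i) ∧
    (∀ i, (∀ u v, A i u v → D u v) ∧ (∀ v, v ≠ r → ∃! u, A i u v) ∧
      (∀ u, ¬ A i u r) ∧ (∀ v, Relation.ReflTransGen (A i) r v)) ∧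
    (∀ u v, D u v → ∑ i, (if A i u v then lam i else 0) ≤ w u v) ∧
    x = ∑ i, lam i}

lemma packVal_eq {V : Type*} [Fintype V] (D : V → V → Prop) (r : V) (w : V → V → ℝ) :
    packVal D r w = sSup (packSet D r w) := rfl

/-- The in-cut value at a vertex. -/
noncomputable def cut {V : Type*} [Fintype V] (D : V → V → Prop) (w : V → V → ℝ) (v : V) : ℝ :=
  ∑ u, if D u v then w u v else 0

lemma zero_mem_packSet {V : Type*} [Fintype V] (D : V → V → Prop) (r : V) (w : V → V → ℝ)
    (hw : ∀ u v, 0 ≤ w u v) : (0 : ℝ) ∈ packSet D r w := by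
  refine ⟨0, Fin.elim0, Fin.elim0, fun i => i.elim0, fun i => i.elim0, ?_, ?_⟩
  · intro u v _
    simpa using hw u v
  · simp

lemma mem_le_cut {V : Type*} [Fintype V] {D : V → V → Prop} {r : V} {w : V → V → ℝ}
    {x : ℝ} (hx : x ∈ packSet D r w) {v : V} (hv : v ≠ r) : x ≤ cut D w v := by
  obtain ⟨t, lam, A, hlam, hArb, hcap, hxval⟩ := hx
  have key : ∀ i, ∑ u, (if A i u v then lam i else 0) = lam i := by
    intro i
    obtain ⟨u₁, hu₁, huniq⟩ := (hArb i).2.1 v hv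
    have : ∀ u, (if A i u v then lam i else 0) = (if u = u₁ then lam i else 0) := by
      intro u
      by_cases h : A i u v
      · rw [if_pos h, if_pos (huniq u h)]
      · rw [if_neg h, if_neg]
        rintro rfl; exact h hu₁
    rw [Finset.sum_congr rfl (fun u _ => this u)]
    simp [Finset.sum_ite_eq']
  calc x = ∑ i, lam i := hxval
    _ = ∑ i, ∑ u, (if A i u v then lam i else 0) := by
        rw [Finset.sum_congr rfl (fun i _ => (key i).symm)]
    _ = ∑ u, ∑ i, (if A i u v then lam i else 0) := Finset.sum_comm
    _ ≤ ∑ u, (if D u v then w u v else 0) := by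
        apply Finset.sum_le_sum
        intro u _
        by_cases h : D u v
        · rw [if_pos h]; exact hcap u v h
        · rw [if_neg h]
          apply le_of_eq
          apply Finset.sum_eq_zero
          intro i _
          rw [if_neg (fun hAi => h ((hArb i).1 u v hAi))]
    _ = cut D w v := rfl

lemma bddAbove_packSet {V : Type*} [Fintype V] (D : V → V → Prop) (r : V) (w : V → V → ℝ)
    (v₀ : V) (hv₀ : v₀ ≠ r) : BddAbove (packSet D r w) :=
  ⟨cut D w v₀, fun _ hx => mem_le_cut hx hv₀⟩

lemma sSup_packSet_nonneg {V : Type*} [Fintype V] (D : V → V → Prop) (r : V) (w : V → V → ℝ)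
    (hw : ∀ u v, 0 ≤ w u v) (v₀ : V) (hv₀ : v₀ ≠ r) : 0 ≤ sSup (packSet D r w) :=
  le_csSup (bddAbove_packSet D r w v₀ hv₀) (zero_mem_packSet D r w hw)

/-- Subtracting `m` along a branching with exactly one edge into `v` drops the cut at `v`
by exactly `m`. -/
lemma cut_sub {V : Type*} [Fintype V] {D : V → V → Prop} {r : V} (w w' : V → V → ℝ)
    (A : V → V → Prop) (hAD : ∀ u v, A u v → D u v)
    (hAuniq : ∀ v, v ≠ r → ∃! u, A u v) (m : ℝ)
    (h1 : ∀ u v, A u v → w' u v = w u v - m)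
    (h2 : ∀ u v, ¬ A u v → w' u v = w u v) {v : V} (hv : v ≠ r) :
    cut D w' v = cut D w v - m := by
  obtain ⟨u₁, hu₁, huniq⟩ := hAuniq v hv
  unfold cut
  have : ∀ u, (if D u v then w' u v else 0)
      = (if D u v then w u v else 0) - (if u = u₁ then m else 0) := by
    intro u
    by_cases hAu : A u v
    · rw [if_pos (hAD u v hAu), if_pos (huniq u hAu), if_pos (hAD u v hAu), h1 u v hAu]
    · have hne : u ≠ u₁ := by rintro rfl; exact hAu hu₁
      rw [if_neg hne]
      by_cases hDu : D u v
      · rw [if_pos hDu, if_pos hDu, h2 u v hAu]; ring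
      · rw [if_neg hDu, if_neg hDu]; ring
  rw [Finset.sum_congr rfl (fun u _ => this u), Finset.sum_sub_distrib]
  congr 1
  simp [Finset.sum_ite_eq']

/-- Easy direction: adding one arborescence `A` with weight `m` on top of a packing for `w'`. -/
lemma add_arb_le {V : Type*} [Fintype V] (D : V → V → Prop) (r : V) (w w' : V → V → ℝ)
    (v₀ : V) (hv₀ : v₀ ≠ r) (hw' : ∀ u v, 0 ≤ w' u v) (m : ℝ) (hm : 0 ≤ m)
    (A : V → V → Prop)
    (hA : (∀ u v, A u v → D u v) ∧ (∀ v, v ≠ r → ∃! u, A u v) ∧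
      (∀ u, ¬ A u r) ∧ (∀ v, Relation.ReflTransGen A r v))
    (hcomp : ∀ u v, D u v → (if A u v then w' u v + m else w' u v) ≤ w u v) :
    m + sSup (packSet D r w') ≤ sSup (packSet D r w) := by
  have hne : (packSet D r w').Nonempty := ⟨0, zero_mem_packSet D r w' hw'⟩
  have key : sSup (packSet D r w') ≤ sSup (packSet D r w) - m := by
    apply csSup_le hne
    intro x hx
    have hmem : m + x ∈ packSet D r w := by
      obtain ⟨t, lam, B, hlam, hB, hcap, hxval⟩ := hx
      refine ⟨t + 1, Fin.cons m lam, Fin.cons A B, ?_, ?_, ?_, ?_⟩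
      · intro i
        induction i using Fin.cases with
        | zero => simpa using hm
        | succ j => simpa using hlam j
      · intro i
        induction i using Fin.cases with
        | zero => simpa using hA
        | succ j => simpa using hB j
      · intro u v hD
        rw [Fin.sum_univ_succ]
        simp only [Fin.cons_zero, Fin.cons_succ]
        have h2 : ∑ i : Fin t, (if B i u v then lam i else 0) ≤ w' u v := hcap u v hD
        have := hcomp u v hD
        by_cases hAuv : A u v
        · rw [if_pos hAuv]; rw [if_pos hAuv] at this; linarith
        · rw [if_neg hAuv]; rw [if_neg hAuv] at this; linarith
      · rw [Fin.sum_univ_succ]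
        simp only [Fin.cons_zero, Fin.cons_succ]
        rw [hxval]
    have := le_csSup (bddAbove_packSet D r w v₀ hv₀) hmem
    linarith
  linarith

/-- Hard (Edmonds) direction in the acyclic case: any value below all trivial cuts
is achieved by a packing.  By induction on the number of positively weighted edges. -/
lemma hard_dir {V : Type*} [Fintype V] (D : V → V → Prop) (r : V)
    (hD : ∀ v, ¬ Relation.TransGen D v v) (v₀ : V) (hv₀ : v₀ ≠ r) :
    ∀ n (w : V → V → ℝ), (∀ u v, 0 ≤ w u v) →
      (Finset.univ.filter (fun q : V × V => D q.1 q.2 ∧ 0 < w q.1 q.2)).card ≤ n →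
      ∀ x : ℝ, (∀ v, v ≠ r → x ≤ cut D w v) → x ≤ sSup (packSet D r w) := by
  intro n
  induction n with
  | zero =>
    intro w hw hcard x hx
    rcases le_or_gt x 0 with h | h
    · exact h.trans (sSup_packSet_nonneg D r w hw v₀ hv₀)
    · exfalso
      by_cases hB : ∃ u, D u v₀ ∧ 0 < w u v₀
      · obtain ⟨u, hu⟩ := hB
        have : (u, v₀) ∈ Finset.univ.filter (fun q : V × V => D q.1 q.2 ∧ 0 < w q.1 q.2) := by
          simp [hu.1, hu.2]
        have := Finset.card_pos.2 ⟨_, this⟩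
        omega
      · push_neg at hB
        have hcut0 : cut D w v₀ = 0 := by
          apply Finset.sum_eq_zero
          intro u _
          by_cases hDu : D u v₀
          · rw [if_pos hDu]
            have := hB u hDu
            linarith [hw u v₀]
          · rw [if_neg hDu]
        have := hx v₀ hv₀
        rw [hcut0] at this
        linarith
  | succ k ih =>
    intro w hw hcard x hx
    rcases le_or_gt x 0 with h | h
    · exact h.trans (sSup_packSet_nonneg D r w hw v₀ hv₀)
    by_cases hB : ∀ v, v ≠ r → ∃ u, D u v ∧ 0 < w u v
    case neg =>
      push_neg at hB
      obtain ⟨v, hv, hv'⟩ := hB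
      have hcut0 : cut D w v = 0 := by
        apply Finset.sum_eq_zero
        intro u _
        by_cases hDu : D u v
        · rw [if_pos hDu]
          have := hv' u hDu
          linarith [hw u v]
        · rw [if_neg hDu]
      have := hx v hv
      rw [hcut0] at this
      linarith
    case pos =>
      -- choose a positive-weight parent for every non-root vertex
      obtain ⟨p, hp⟩ : ∃ p : V → V, ∀ v, v ≠ r → D (p v) v ∧ 0 < w (p v) v :=
        ⟨fun v => if h : v ≠ r then (hB v h).choose else v,
         fun v h => by dsimp only; rw [dif_pos h]; exact (hB v h).choose_spec⟩
      set s : Finset V := Finset.univ.filter (· ≠ r) with hs_def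
      have hs : v₀ ∈ s := by simp [hs_def, hv₀]
      have hsne : s.Nonempty := ⟨v₀, hs⟩
      set m : ℝ := s.inf' hsne (fun v => w (p v) v) with hm_def
      have hm0 : 0 < m := by
        rw [hm_def, Finset.lt_inf'_iff]
        intro v hv
        exact (hp v (by simpa [hs_def] using hv)).2
      have hmle : ∀ v, v ≠ r → m ≤ w (p v) v := by
        intro v hv
        exact Finset.inf'_le _ (by simp [hs_def, hv])
      obtain ⟨vs, hvs, hvseq⟩ := Finset.exists_mem_eq_inf' hsne (fun v => w (p v) v)
      have hvsr : vs ≠ r := by simpa [hs_def] using hvs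
      set A : V → V → Prop := fun u v => v ≠ r ∧ u = p v with hA_def
      have hAD : ∀ u v, A u v → D u v := by
        rintro u v ⟨h1, rfl⟩; exact (hp v h1).1
      have hAuniq : ∀ v, v ≠ r → ∃! u, A u v := by
        intro v hv
        exact ⟨p v, ⟨hv, rfl⟩, fun u hu => hu.2⟩
      have hAr : ∀ u, ¬ A u r := fun u h => h.1 rfl
      have hreach : ∀ v, Relation.ReflTransGen A r v := by
        have wf : WellFounded (Relation.TransGen D) := by
          haveI : IsIrrefl V (Relation.TransGen D) := ⟨hD⟩
          haveI : IsTrans V (Relation.TransGen D) := ⟨fun _ _ _ => Relation.TransGen.trans⟩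
          exact Finite.wellFounded_of_trans_of_irrefl _
        intro v
        refine wf.induction v ?_
        intro v ihv
        by_cases hvr : v = r
        · subst hvr; exact Relation.ReflTransGen.refl
        · exact (ihv (p v) (Relation.TransGen.single (hp v hvr).1)).tail ⟨hvr, rfl⟩
      set w' : V → V → ℝ := fun u v => if A u v then w u v - m else w u v with hw'_def
      have hw' : ∀ u v, 0 ≤ w' u v := by
        intro u v
        simp only [hw'_def]
        by_cases hAuv : A u v
        · rw [if_pos hAuv]
          obtain ⟨h1, rfl⟩ := hAuv
          linarith [hmle v h1]
        · rw [if_neg hAuv]; exact hw u v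
      have hcut : ∀ v, v ≠ r → cut D w' v = cut D w v - m := by
        intro v hv
        refine cut_sub w w' A hAD hAuniq m ?_ ?_ hv
        · intro u v' h; simp only [hw'_def]; rw [if_pos h]
        · intro u v' h; simp only [hw'_def]; rw [if_neg h]
      -- the positive edge set strictly shrinks
      have hcard' : (Finset.univ.filter (fun q : V × V => D q.1 q.2 ∧ 0 < w' q.1 q.2)).card ≤ k := by
        have hsub : (Finset.univ.filter (fun q : V × V => D q.1 q.2 ∧ 0 < w' q.1 q.2)) ⊆
            (Finset.univ.filter (fun q : V × V => D q.1 q.2 ∧ 0 < w q.1 q.2)) := by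
          intro q hq
          simp only [Finset.mem_filter, Finset.mem_univ, true_and] at hq ⊢
          refine ⟨hq.1, ?_⟩
          have := hq.2
          simp only [hw'_def] at this
          by_cases hAq : A q.1 q.2
          · rw [if_pos hAq] at this; linarith
          · rwa [if_neg hAq] at this
        have hmem : (p vs, vs) ∈ (Finset.univ.filter (fun q : V × V => D q.1 q.2 ∧ 0 < w q.1 q.2)) := by
          simp only [Finset.mem_filter, Finset.mem_univ, true_and]
          exact hp vs hvsr
        have hnmem : (p vs, vs) ∉ (Finset.univ.filter (fun q : V × V => D q.1 q.2 ∧ 0 < w' q.1 q.2)) := by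
          simp only [Finset.mem_filter, Finset.mem_univ, true_and, not_and]
          intro _
          simp only [hw'_def]
          rw [if_pos (⟨hvsr, rfl⟩ : A (p vs) vs)]
          rw [hm_def, hvseq]
          simp
        have := Finset.card_lt_card (Finset.ssubset_iff_of_subset hsub |>.2 ⟨_, hmem, hnmem⟩)
        omega
      have hx' : x - m ≤ sSup (packSet D r w') := by
        apply ih w' hw' hcard'
        intro v hv
        rw [hcut v hv]
        linarith [hx v hv]
      have := add_arb_le D r w w' v₀ hv₀ hw' m hm0.le A ⟨hAD, hAuniq, hAr, hreach⟩ ?_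
      · linarith
      · intro u v hDuv
        simp only [hw'_def]
        by_cases hAuv : A u v
        · rw [if_pos hAuv, if_pos hAuv]; ring_nf; exact le_refl _
        · rw [if_neg hAuv, if_neg hAuv]

/-- Greedy arborescence packing is optimal in acyclic digraphs: subtracting
the minimum positive weight `w (a, b)` along a spanning `r`-arborescence `A` containing
the edge `(a, b)` (all of whose edges have positive weight) decreases the maximum packing
value by exactly `w (a, b)`. -/
theorem stmt_16 {V : Type*} [Fintype V] (D : V → V → Prop) (r : V) (w : V → V → ℝ)
    (hD : ∀ v, ¬ Relation.TransGen D v v)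
    (hroot : (∀ u, ¬ D u r) ∧ ∀ v, (∀ u, ¬ D u v) → v = r)
    (hw : ∀ u v, 0 ≤ w u v)
    (a b : V) (hab : D a b) (hpos : 0 < w a b)
    (hmin : ∀ u v, D u v → 0 < w u v → w a b ≤ w u v)
    (A : V → V → Prop)
    (hA : (∀ u v, A u v → D u v) ∧ (∀ v, v ≠ r → ∃! u, A u v) ∧
      (∀ u, ¬ A u r) ∧ (∀ v, Relation.ReflTransGen A r v))
    (hAab : A a b) (hApos : ∀ u v, A u v → 0 < w u v) :
    packVal D r w =
      w a b + packVal D r (fun u v => if A u v then w u v - w a b else w u v) := by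
  have hbr : b ≠ r := by
    rintro rfl; exact hroot.1 a hab
  set w' : V → V → ℝ := fun u v => if A u v then w u v - w a b else w u v with hw'_def
  have hw' : ∀ u v, 0 ≤ w' u v := by
    intro u v
    simp only [hw'_def]
    by_cases hAuv : A u v
    · rw [if_pos hAuv]
      have := hmin u v (hA.1 u v hAuv) (hApos u v hAuv)
      linarith
    · rw [if_neg hAuv]; exact hw u v
  rw [packVal_eq, packVal_eq]
  apply le_antisymm
  · apply csSup_le ⟨0, zero_mem_packSet D r w hw⟩
    intro x hx
    rcases le_or_gt x (w a b) with h | h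
    · have := sSup_packSet_nonneg D r w' hw' b hbr
      linarith
    · have hx' : x - w a b ≤ sSup (packSet D r w') := by
        apply hard_dir D r hD b hbr _ w' hw' (le_refl _)
        intro v hv
        have hcut : cut D w' v = cut D w v - w a b := by
          refine cut_sub w w' A hA.1 hA.2.1 (w a b) ?_ ?_ hv
          · intro u v' h; simp only [hw'_def]; rw [if_pos h]
          · intro u v' h; simp only [hw'_def]; rw [if_neg h]
        rw [hcut]
        have := mem_le_cut hx hv
        linarith
      linarith
  · have := add_arb_le D r w w' b hbr hw' (w a b) hpos.le A hA ?_
    · linarith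
    · intro u v hDuv
      simp only [hw'_def]
      by_cases hAuv : A u v
      · rw [if_pos hAuv, if_pos hAuv]; ring_nf; exact le_refl _
      · rw [if_neg hAuv, if_neg hAuv]
end
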